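/- arXiv:1206.4178 — 3 statements merged into one kernel-verified Lean document; each statement's English description precedes it below -/
import Mathlib

section
/- The number of permutations π of {1,...,n+1} satisfying (for all 1 ≤ a < b ≤ n: π⁻¹(b) ≤ a implies π⁻¹(a+1) ≤ b) equals the n-th large Schröder number r_n; and the number of such permutations additionally satisfying π⁻¹(n+1) < π⁻¹(1) equals the n-th small Schröder number s_n = r_n / 2. -/
/-- The extended chain: `E S 0 = ∅`, `E S m = S m` for `1 ≤ m ≤ n`, and
`E S m = {1, ..., n+1}` for `m > n`. -/
def extColl (n : ℕ) (S : ℕ → Finset ℕ) (m : ℕ) : Finset ℕ :=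
  if m = 0 then ∅ else if m ≤ n then S m else Finset.Icc 1 (n + 1)

/-- The permutation attached to a smooth collection: `π(m)` is the unique element of
`S m \ S (m-1)` (realized as the sum over the singleton difference), and `0` outside
`{1, ..., n+1}`. -/
def piOf (n : ℕ) (S : ℕ → Finset ℕ) (m : ℕ) : ℕ :=
  if 1 ≤ m ∧ m ≤ n + 1 then ∑ x ∈ extColl n S m \ extColl n S (m - 1), x else 0

/-- Permutations `π` of `{1, ..., n+1}` (extended by `0` elsewhere) such that for all
`1 ≤ a < b ≤ n`, `π⁻¹(b) ≤ a` implies `π⁻¹(a+1) ≤ b`. -/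
def GoodPerm (n : ℕ) (p : ℕ → ℕ) : Prop :=
  Set.BijOn p (Set.Icc 1 (n + 1)) (Set.Icc 1 (n + 1)) ∧
  (∀ m, m ∉ Set.Icc 1 (n + 1) → p m = 0) ∧
  (∀ a b, 1 ≤ a → a < b → b ≤ n →
    (∃ x, 1 ≤ x ∧ x ≤ a ∧ p x = b) → (∃ y, 1 ≤ y ∧ y ≤ b ∧ p y = a + 1))

/-! ### Framework -/

def PermOn (m : ℕ) (p : ℕ → ℕ) : Prop :=
  Set.BijOn p (Set.Icc 1 m) (Set.Icc 1 m) ∧ ∀ x ∉ Set.Icc 1 m, p x = 0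

def Av (p : ℕ → ℕ) : Prop := ∀ P Q, ¬ (P < p Q ∧ p Q < p P ∧ p P < Q)

def AP (m : ℕ) : Set (ℕ → ℕ) := {p | PermOn m p ∧ Av p}

lemma mem_AP {m : ℕ} {p : ℕ → ℕ} : p ∈ AP m ↔ PermOn m p ∧ Av p := Iff.rfl

lemma PermOn.bounds {m : ℕ} {p : ℕ → ℕ} (h : PermOn m p) {x : ℕ} (hx : 1 ≤ x) (hx' : x ≤ m) :
    1 ≤ p x ∧ p x ≤ m := by
  have := h.1.mapsTo (Set.mem_Icc.2 ⟨hx, hx'⟩)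
  exact Set.mem_Icc.1 this

lemma PermOn.zero {m : ℕ} {p : ℕ → ℕ} (h : PermOn m p) {x : ℕ} (hx : ¬ (1 ≤ x ∧ x ≤ m)) :
    p x = 0 := h.2 x (by simpa [Set.mem_Icc] using hx)

lemma PermOn.inj {m : ℕ} {p : ℕ → ℕ} (h : PermOn m p) {x y : ℕ}
    (hx : 1 ≤ x) (hx' : x ≤ m) (hy : 1 ≤ y) (hy' : y ≤ m) (hxy : p x = p y) : x = y :=
  h.1.injOn (Set.mem_Icc.2 ⟨hx, hx'⟩) (Set.mem_Icc.2 ⟨hy, hy'⟩) hxy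

lemma PermOn.surj {m : ℕ} {p : ℕ → ℕ} (h : PermOn m p) {y : ℕ} (hy : 1 ≤ y) (hy' : y ≤ m) :
    ∃ x, 1 ≤ x ∧ x ≤ m ∧ p x = y := by
  obtain ⟨x, hx, hpx⟩ := h.1.surjOn (Set.mem_Icc.2 ⟨hy, hy'⟩)
  exact ⟨x, (Set.mem_Icc.1 hx).1, (Set.mem_Icc.1 hx).2, hpx⟩

/-- The key reformulation of the smoothness condition. -/
lemma goodPerm_iff {n : ℕ} {p : ℕ → ℕ} : GoodPerm n p ↔ p ∈ AP (n+1) := by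
  constructor
  · rintro ⟨hb, hz, hc⟩
    refine ⟨⟨hb, hz⟩, ?_⟩
    rintro P Q ⟨h1, h2, h3⟩
    -- p P and p Q are nonzero, so P, Q ∈ [1, n+1]
    have hQmem : 1 ≤ Q ∧ Q ≤ n + 1 := by
      by_contra hQ
      have := hz Q (by simpa [Set.mem_Icc] using hQ)
      omega
    have hPmem : 1 ≤ P ∧ P ≤ n + 1 := by
      by_contra hP
      have := hz P (by simpa [Set.mem_Icc] using hP)
      omega
    -- set a = p Q - 1, b = p P
    have hpQ : 1 ≤ p Q := by omega
    obtain ⟨y, hy1, hy2, hy3⟩ := hc (p Q - 1) (p P) (by omega) (by omega) (by omega)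
      ⟨P, by omega, by omega, rfl⟩
    -- y is position of value p Q ; but that's Q by injectivity
    have : y = Q := by
      refine (show PermOn (n+1) p from ⟨hb, hz⟩).inj hy1 (by omega) hQmem.1 hQmem.2 ?_
      rw [hy3]; omega
    omega
  · rintro ⟨⟨hb, hz⟩, hav⟩
    refine ⟨hb, hz, ?_⟩
    rintro a b ha hab hbn ⟨x, hx1, hx2, hx3⟩
    by_contra hno
    push_neg at hno
    -- position of a+1
    obtain ⟨y, hy1, hy2, hy3⟩ := (show PermOn (n+1) p from ⟨hb, hz⟩).surj (y := a + 1) (by omega) (by omega)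
    have hyb : b < y := by
      rcases le_or_gt y b with h | h
      · exact absurd hy3 (by have := hno y hy1 h; omega)
      · exact h
    have hlt : a + 1 < b := by
      rcases Nat.lt_or_ge (a+1) b with h | h
      · exact h
      · exfalso
        have hxb : p x = p y := by omega
        have := (show PermOn (n+1) p from ⟨hb, hz⟩).inj (x := x) (y := y)
          hx1 (by omega) hy1 (by omega) hxb
        omega
    exact hav x y ⟨by omega, by omega, by omega⟩

/-! ### Finiteness -/

lemma AP_finite (m : ℕ) : (AP m).Finite := by
  classical
  have h : AP m ⊆ Set.range (fun (f : Fin m → Fin m) (x : ℕ) =>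
      if h : 1 ≤ x ∧ x ≤ m then (f ⟨x - 1, by omega⟩ : ℕ) + 1 else 0) := by
    rintro p ⟨hperm, -⟩
    refine ⟨fun i => ⟨p (i + 1) - 1, ?_⟩, ?_⟩
    · have := hperm.bounds (x := (i : ℕ) + 1) (by omega) (by omega)
      omega
    · funext x
      by_cases hx : 1 ≤ x ∧ x ≤ m
      · have := hperm.bounds hx.1 hx.2
        simp only [dif_pos hx]
        have hx1 : x - 1 + 1 = x := by omega
        simp [hx1]
        omega
      · simp only [dif_neg hx]
        exact (hperm.zero hx).symm
  exact Set.Finite.subset (Set.finite_range _) h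

/-! ### Counting -/

noncomputable def apc (m : ℕ) : ℕ := (AP m).ncard

def Cl (m v : ℕ) : Set (ℕ → ℕ) := {p | p ∈ AP m ∧ p 1 = v + 1}

lemma mem_Cl {m v : ℕ} {p : ℕ → ℕ} : p ∈ Cl m v ↔ p ∈ AP m ∧ p 1 = v + 1 := Iff.rfl

lemma Cl_subset {m v : ℕ} : Cl m v ⊆ AP m := fun _ h => h.1

lemma Cl_finite (m v : ℕ) : (Cl m v).Finite := (AP_finite m).subset Cl_subset

lemma apc_one : apc 1 = 1 := by
  have h : AP 1 = {fun x => if x = 1 then 1 else 0} := by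
    ext p
    constructor
    · rintro ⟨hperm, -⟩
      have h1 := hperm.bounds (x := 1) le_rfl le_rfl
      funext x
      by_cases hx : x = 1
      · subst hx; simp; omega
      · simp only [if_neg hx]
        exact hperm.zero (by omega)
    · rintro rfl
      refine ⟨⟨⟨?_, ?_, ?_⟩, ?_⟩, ?_⟩
      · intro x hx
        simp only [Set.mem_Icc] at hx ⊢
        have hx1 : x = 1 := by omega
        subst hx1
        simp
      · intro x hx y hy hxy
        simp only [Set.mem_Icc] at hx hy
        omega
      · intro y hy
        simp only [Set.mem_Icc] at hy
        exact ⟨1, by simp, by simp; omega⟩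
      · intro x hx
        simp only [Set.mem_Icc] at hx
        simp only [if_neg (by omega : ¬ x = 1)]
      · rintro P Q ⟨h1, h2, h3⟩
        have e1 : (fun x => if x = 1 then 1 else 0) Q ≤ 1 := by
          show (if Q = 1 then 1 else 0) ≤ 1
          split <;> omega
        have e2 : (fun x => if x = 1 then 1 else 0) P ≤ 1 := by
          show (if P = 1 then 1 else 0) ≤ 1
          split <;> omega
        omega
  rw [apc, h, Set.ncard_singleton]

lemma ncard_partition (m : ℕ) (hm : 1 ≤ m) :
    apc m = ∑ v ∈ Finset.range m, (Cl m v).ncard := by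
  have key : ∀ k : ℕ, ({p | p ∈ AP m ∧ p 1 ≤ k} : Set (ℕ → ℕ)).ncard
      = ∑ v ∈ Finset.range k, (Cl m v).ncard := by
    intro k
    induction k with
    | zero =>
      have : ({p | p ∈ AP m ∧ p 1 ≤ 0} : Set (ℕ → ℕ)) = ∅ := by
        ext p
        simp only [Set.mem_setOf_eq, Set.mem_empty_iff_false, iff_false, not_and]
        intro hp
        have := hp.1.bounds (x := 1) le_rfl hm
        omega
      rw [this]
      simp
    | succ k ih =>
      have hsplit : ({p | p ∈ AP m ∧ p 1 ≤ k + 1} : Set (ℕ → ℕ))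
          = {p | p ∈ AP m ∧ p 1 ≤ k} ∪ Cl m k := by
        clear ih
        ext p
        simp only [Set.mem_setOf_eq, Set.mem_union, mem_Cl]
        constructor
        · rintro ⟨hp, hle⟩
          rcases Nat.lt_or_ge (p 1) (k+1) with h | h
          · exact Or.inl ⟨hp, by omega⟩
          · exact Or.inr ⟨hp, by omega⟩
        · rintro (⟨hp, h⟩ | ⟨hp, h⟩) <;> exact ⟨hp, by omega⟩
      have hdisj : Disjoint ({p | p ∈ AP m ∧ p 1 ≤ k} : Set (ℕ → ℕ)) (Cl m k) := by
        clear ih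
        rw [Set.disjoint_left]
        rintro p ⟨-, h⟩ ⟨-, h'⟩
        omega
      rw [hsplit, Set.ncard_union_eq hdisj ((AP_finite m).subset (fun _ h => h.1))
        (Cl_finite m k), ih, Finset.sum_range_succ]
  have : AP m = {p | p ∈ AP m ∧ p 1 ≤ m} := by
    ext p
    simp only [Set.mem_setOf_eq, iff_self_and]
    intro hp
    exact (hp.1.bounds (x := 1) le_rfl hm).2
  rw [apc, this, key m]

/-! ### The class `p 1 = 1` -/

def Hmap (m : ℕ) (p : ℕ → ℕ) : ℕ → ℕ :=
  fun x => if x = 1 then 1 else if 2 ≤ x ∧ x ≤ m then p (x-1) + 1 else 0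

lemma Hmap_one (m : ℕ) (p : ℕ → ℕ) : Hmap m p 1 = 1 := by simp [Hmap]

lemma Hmap_mid {m x : ℕ} (p : ℕ → ℕ) (h2 : 2 ≤ x) (hm : x ≤ m) :
    Hmap m p x = p (x-1) + 1 := by
  simp only [Hmap, if_neg (by omega : ¬ x = 1), if_pos (⟨h2, hm⟩ : 2 ≤ x ∧ x ≤ m)]

lemma Hmap_out {m x : ℕ} (p : ℕ → ℕ) (hm : 1 ≤ m) (h : ¬ (1 ≤ x ∧ x ≤ m)) : Hmap m p x = 0 := by
  simp only [Hmap, if_neg (by omega : ¬ x = 1)]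
  rw [if_neg (show ¬ (2 ≤ x ∧ x ≤ m) by omega)]

lemma Cl_zero_eq (m : ℕ) (hm : 2 ≤ m) : Cl m 0 = Hmap m '' AP (m-1) := by
  ext q
  constructor
  · rintro ⟨⟨hperm, hav⟩, hq1⟩
    -- every value at position ≥ 2 is ≥ 2
    have hval : ∀ x, 2 ≤ x → x ≤ m → 2 ≤ q x ∧ q x ≤ m := by
      intro x hx2 hxm
      have hb := hperm.bounds (x := x) (by omega) hxm
      rcases Nat.lt_or_ge (q x) 2 with h | h
      · exfalso
        have : q x = 1 := by omega
        have := hperm.inj (x := x) (y := 1) (by omega) hxm le_rfl (by omega)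
          (by rw [this, hq1])
        omega
      · exact ⟨h, hb.2⟩
    refine ⟨fun y => if 1 ≤ y ∧ y ≤ m - 1 then q (y+1) - 1 else 0,
      ⟨⟨⟨?_, ?_, ?_⟩, ?_⟩, ?_⟩, ?_⟩
    · -- maps to
      intro y hy
      simp only [Set.mem_Icc] at hy ⊢
      rw [if_pos hy]
      have := hval (y+1) (by omega) (by omega)
      omega
    · -- injOn
      intro x hx y hy hxy
      simp only [Set.mem_Icc] at hx hy
      dsimp only at hxy
      rw [if_pos hx, if_pos hy] at hxy
      have h1 := hval (x+1) (by omega) (by omega)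
      have h2 := hval (y+1) (by omega) (by omega)
      have : q (x+1) = q (y+1) := by omega
      have := hperm.inj (x := x+1) (y := y+1) (by omega) (by omega) (by omega) (by omega) this
      omega
    · -- surjOn
      intro y hy
      simp only [Set.mem_Icc] at hy
      obtain ⟨x, hx1, hx2, hx3⟩ := hperm.surj (y := y + 1) (by omega) (by omega)
      have hxne : x ≠ 1 := by
        intro h; rw [h, hq1] at hx3; omega
      refine ⟨x - 1, Set.mem_Icc.2 ⟨by omega, by omega⟩, ?_⟩
      show (if 1 ≤ x - 1 ∧ x - 1 ≤ m - 1 then q (x - 1 + 1) - 1 else 0) = y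
      rw [if_pos (show 1 ≤ x - 1 ∧ x - 1 ≤ m - 1 by omega), show x - 1 + 1 = x by omega, hx3]
      omega
    · -- zero outside
      intro y hy
      simp only [Set.mem_Icc] at hy
      show (if 1 ≤ y ∧ y ≤ m - 1 then q (y + 1) - 1 else 0) = 0
      rw [if_neg (show ¬ (1 ≤ y ∧ y ≤ m - 1) by omega)]
    · -- Av
      rintro i j ⟨h1, h2, h3⟩
        -- p i ≥ 2 forces branches
      simp only at h1 h2 h3
      by_cases hi : 1 ≤ i ∧ i ≤ m - 1
      · by_cases hj : 1 ≤ j ∧ j ≤ m - 1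
        · rw [if_pos hi] at h2 h3
          rw [if_pos hj] at h1 h2
          have hvi := hval (i+1) (by omega) (by omega)
          have hvj := hval (j+1) (by omega) (by omega)
          exact hav (i+1) (j+1) ⟨by omega, by omega, by omega⟩
        · rw [if_neg hj] at h1 h2; omega
      · rw [if_neg hi] at h2 h3; omega
    · -- Hmap applied gives back q
      funext x
      rcases eq_or_ne x 1 with rfl | hx1
      · rw [Hmap_one, hq1]
      · by_cases hx : 2 ≤ x ∧ x ≤ m
        · rw [Hmap_mid _ hx.1 hx.2, if_pos (show 1 ≤ x - 1 ∧ x - 1 ≤ m - 1 by omega)]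
          have h1 : x - 1 + 1 = x := by omega
          rw [h1]
          have := hval x hx.1 hx.2
          omega
        · rw [Hmap_out _ (by omega) (show ¬ (1 ≤ x ∧ x ≤ m) by omega)]
          exact (hperm.zero (by omega)).symm
  · rintro ⟨p, ⟨hperm, hav⟩, rfl⟩
    refine ⟨⟨⟨⟨?_, ?_, ?_⟩, ?_⟩, ?_⟩, Hmap_one m p⟩
    · -- maps to
      intro x hx
      simp only [Set.mem_Icc] at hx ⊢
      rcases eq_or_ne x 1 with rfl | hx1
      · rw [Hmap_one]; omega
      · rw [Hmap_mid _ (by omega) hx.2]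
        have := hperm.bounds (x := x - 1) (by omega) (by omega)
        omega
    · -- injOn
      intro x hx y hy hxy
      simp only [Set.mem_Icc] at hx hy
      rcases eq_or_ne x 1 with rfl | hx1 <;> rcases eq_or_ne y 1 with rfl | hy1
      · rfl
      · rw [Hmap_one, Hmap_mid _ (by omega) hy.2] at hxy
        have := hperm.bounds (x := y - 1) (by omega) (by omega)
        omega
      · rw [Hmap_one, Hmap_mid _ (by omega) hx.2] at hxy
        have := hperm.bounds (x := x - 1) (by omega) (by omega)
        omega
      · rw [Hmap_mid _ (by omega) hx.2, Hmap_mid _ (by omega) hy.2] at hxy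
        have := hperm.inj (x := x - 1) (y := y - 1) (by omega) (by omega) (by omega) (by omega)
          (by omega)
        omega
    · -- surjOn
      intro y hy
      simp only [Set.mem_Icc] at hy
      rcases eq_or_ne y 1 with rfl | hy1
      · exact ⟨1, Set.mem_Icc.2 ⟨le_rfl, by omega⟩, Hmap_one m p⟩
      · obtain ⟨x, hx1, hx2, hx3⟩ := hperm.surj (y := y - 1) (by omega) (by omega)
        refine ⟨x + 1, Set.mem_Icc.2 ⟨by omega, by omega⟩, ?_⟩
        rw [Hmap_mid _ (by omega) (by omega)]
        simp only [Nat.add_sub_cancel, hx3]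
        omega
    · -- zero outside
      intro x hx
      simp only [Set.mem_Icc] at hx
      exact Hmap_out _ (by omega) (show ¬ (1 ≤ x ∧ x ≤ m) by omega)
    · -- Av
      rintro P Q ⟨h1, h2, h3⟩
      have hP : 2 ≤ P ∧ P ≤ m := by
        by_contra h
        rcases eq_or_ne P 1 with rfl | hP1
        · rw [Hmap_one] at h2 h3; omega
        · rw [Hmap_out (x := P) _ (by omega) (show ¬ (1 ≤ P ∧ P ≤ m) by omega)] at h2; omega
      have hQ : 2 ≤ Q ∧ Q ≤ m := by
        by_contra h
        rcases eq_or_ne Q 1 with rfl | hQ1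
        · rw [Hmap_one] at h1; omega
        · rw [Hmap_out (x := Q) _ (by omega) (show ¬ (1 ≤ Q ∧ Q ≤ m) by omega)] at h1; omega
      rw [Hmap_mid _ hP.1 hP.2] at h2 h3
      rw [Hmap_mid _ hQ.1 hQ.2] at h1 h2
      exact hav (P-1) (Q-1) ⟨by omega, by omega, by omega⟩

lemma Hmap_injOn (m : ℕ) : Set.InjOn (Hmap m) (AP (m-1)) := by
  intro p hp p' hp' h
  funext y
  by_cases hy : 1 ≤ y ∧ y ≤ m - 1
  · have := congrFun h (y + 1)
    rw [Hmap_mid _ (by omega) (by omega), Hmap_mid _ (by omega) (by omega)] at this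
    simpa using this
  · rw [hp.1.zero hy, hp'.1.zero hy]

lemma Cl_zero_ncard (m : ℕ) (hm : 2 ≤ m) : (Cl m 0).ncard = apc (m-1) := by
  rw [Cl_zero_eq m hm, Set.ncard_image_of_injOn (Hmap_injOn m)]
  rfl

/-! ### The classes `p 1 = v + 1`, `1 ≤ v` -/

def eVal (v : ℕ) (ω : ℕ → ℕ) : ℕ := if ω 1 = 1 then 1 else v + ω 1

def Gmap (m v : ℕ) (τ ω : ℕ → ℕ) : ℕ → ℕ := fun x =>
  if x = 0 then 0
  else if x = 1 then v + 1
  else if x ≤ v + 1 then (if τ (x-1) = v then eVal v ω else τ (x-1) + 1)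
  else if x ≤ m then (if ω (x - v) = 1 then 1 else v + ω (x - v))
  else 0

lemma Gmap_one (m v : ℕ) (τ ω : ℕ → ℕ) : Gmap m v τ ω 1 = v + 1 := by simp [Gmap]

lemma Gmap_block {m v x : ℕ} (τ ω : ℕ → ℕ) (h2 : 2 ≤ x) (hx : x ≤ v + 1) :
    Gmap m v τ ω x = if τ (x-1) = v then eVal v ω else τ (x-1) + 1 := by
  simp only [Gmap, if_neg (show ¬ x = 0 by omega), if_neg (show ¬ x = 1 by omega), if_pos hx]

lemma Gmap_tail {m v x : ℕ} (τ ω : ℕ → ℕ) (h : v + 2 ≤ x) (hm : x ≤ m) :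
    Gmap m v τ ω x = if ω (x - v) = 1 then 1 else v + ω (x - v) := by
  simp only [Gmap, if_neg (show ¬ x = 0 by omega), if_neg (show ¬ x = 1 by omega),
    if_neg (show ¬ x ≤ v + 1 by omega), if_pos hm]

lemma Gmap_out {m v x : ℕ} (τ ω : ℕ → ℕ) (hm : v + 1 ≤ m) (h : ¬ (1 ≤ x ∧ x ≤ m)) :
    Gmap m v τ ω x = 0 := by
  rcases eq_or_ne x 0 with rfl | hx0
  · simp [Gmap]
  · simp only [Gmap, if_neg hx0, if_neg (show ¬ x = 1 by omega),
      if_neg (show ¬ x ≤ v + 1 by omega)]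
    rw [if_neg (show ¬ x ≤ m by omega)]

lemma eVal_cases {m v : ℕ} {ω : ℕ → ℕ} (hω : ω ∈ AP (m - v)) (hv : 1 ≤ v) (hvm : v + 1 ≤ m) :
    (ω 1 = 1 ∧ eVal v ω = 1) ∨
    (2 ≤ ω 1 ∧ ω 1 ≤ m - v ∧ eVal v ω = v + ω 1 ∧ v + 2 ≤ eVal v ω ∧ eVal v ω ≤ m) := by
  have hb := hω.1.bounds (x := 1) le_rfl (by omega)
  rcases eq_or_ne (ω 1) 1 with h | h
  · exact Or.inl ⟨h, by simp [eVal, h]⟩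
  · refine Or.inr ⟨by omega, hb.2, by simp [eVal, h], ?_, ?_⟩ <;> simp [eVal, h] <;> omega

lemma Gmap_mem {m v : ℕ} (hv : 1 ≤ v) (hvm : v + 1 ≤ m) {τ ω : ℕ → ℕ}
    (hτ : τ ∈ AP v) (hω : ω ∈ AP (m - v)) : Gmap m v τ ω ∈ Cl m v := by
  obtain ⟨hτp, hτa⟩ := hτ
  obtain ⟨hωp, hωa⟩ := hω
  have hec := eVal_cases (m := m) ⟨hωp, hωa⟩ hv hvm
  -- block values for non-e slots
  have hblock : ∀ x, 2 ≤ x → x ≤ v + 1 → τ (x-1) ≠ v →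
      Gmap m v τ ω x = τ (x-1) + 1 ∧ 2 ≤ τ (x-1) + 1 ∧ τ (x-1) + 1 ≤ v := by
    intro x h2 hx hne
    have hb := hτp.bounds (x := x - 1) (by omega) (by omega)
    exact ⟨by rw [Gmap_block _ _ h2 hx, if_neg hne], by omega, by omega⟩
  have heslot : ∀ x, 2 ≤ x → x ≤ v + 1 → τ (x-1) = v →
      Gmap m v τ ω x = eVal v ω := by
    intro x h2 hx he
    rw [Gmap_block _ _ h2 hx, if_pos he]
  have htail : ∀ x, v + 2 ≤ x → x ≤ m →
      (ω (x - v) = 1 ∧ Gmap m v τ ω x = 1) ∨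
      (2 ≤ ω (x - v) ∧ ω (x - v) ≤ m - v ∧ Gmap m v τ ω x = v + ω (x - v)) := by
    intro x h2 hx
    have hb := hωp.bounds (x := x - v) (by omega) (by omega)
    rcases eq_or_ne (ω (x - v)) 1 with h | h
    · exact Or.inl ⟨h, by rw [Gmap_tail _ _ h2 hx, if_pos h]⟩
    · exact Or.inr ⟨by omega, hb.2, by rw [Gmap_tail _ _ h2 hx, if_neg h]⟩
  refine ⟨⟨⟨⟨?_, ?_, ?_⟩, ?_⟩, ?_⟩, Gmap_one m v τ ω⟩
  · -- maps to
    intro x hx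
    simp only [Set.mem_Icc] at hx ⊢
    rcases eq_or_ne x 1 with rfl | hx1
    · rw [Gmap_one]; omega
    · by_cases hxb : x ≤ v + 1
      · rcases eq_or_ne (τ (x-1)) v with he | hne
        · rw [heslot x (by omega) hxb he]; omega
        · have := hblock x (by omega) hxb hne; omega
      · rcases htail x (by omega) hx.2 with ⟨-, h⟩ | ⟨h1, h2, h3⟩ <;> omega
  · -- injOn
    intro x hx y hy hxy
    simp only [Set.mem_Icc] at hx hy
    rcases eq_or_ne x 1 with rfl | hx1 <;> rcases eq_or_ne y 1 with rfl | hy1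
    · rfl
    all_goals (try rw [Gmap_one] at hxy)
    · -- x = 1, y ≠ 1 : value v+1 on the right is impossible
      exfalso
      by_cases hyb : y ≤ v + 1
      · rcases eq_or_ne (τ (y-1)) v with he | hne
        · rw [heslot y (by omega) hyb he] at hxy; omega
        · have := hblock y (by omega) hyb hne; omega
      · rcases htail y (by omega) hy.2 with ⟨-, h⟩ | ⟨h1, h2, h3⟩ <;> omega
    · exfalso
      by_cases hxb : x ≤ v + 1
      · rcases eq_or_ne (τ (x-1)) v with he | hne
        · rw [heslot x (by omega) hxb he] at hxy; omega
        · have := hblock x (by omega) hxb hne; omega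
      · rcases htail x (by omega) hx.2 with ⟨-, h⟩ | ⟨h1, h2, h3⟩ <;> omega
    · -- both ≥ 2
      by_cases hxb : x ≤ v + 1 <;> by_cases hyb : y ≤ v + 1
      · -- both in block
        rcases eq_or_ne (τ (x-1)) v with hex | hnex <;>
          rcases eq_or_ne (τ (y-1)) v with hey | hney
        · have := hτp.inj (x := x-1) (y := y-1) (by omega) (by omega) (by omega) (by omega)
            (hex.trans hey.symm)
          omega
        · exfalso
          rw [heslot x (by omega) hxb hex] at hxy
          have := hblock y (by omega) hyb hney
          omega
        · exfalso
          rw [heslot y (by omega) hyb hey] at hxy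
          have := hblock x (by omega) hxb hnex
          omega
        · have h1 := hblock x (by omega) hxb hnex
          have h2 := hblock y (by omega) hyb hney
          have : τ (x-1) = τ (y-1) := by omega
          have := hτp.inj (x := x-1) (y := y-1) (by omega) (by omega) (by omega) (by omega) this
          omega
      · -- x block, y tail
        exfalso
        rcases eq_or_ne (τ (x-1)) v with hex | hnex
        · rw [heslot x (by omega) hxb hex] at hxy
          rcases htail y (by omega) hy.2 with ⟨hy1, hy2⟩ | ⟨hy1, hy2, hy3⟩ <;>
            rcases hec with ⟨he1, he2⟩ | ⟨he1, he2, he3, he4, he5⟩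
          · -- eVal = 1, tail value 1 : ω collision at 1 and y - v
            have := hωp.inj (x := 1) (y := y - v) le_rfl (by omega) (by omega) (by omega)
              (by omega)
            omega
          · omega
          · omega
          · have : ω 1 = ω (y - v) := by omega
            have := hωp.inj (x := 1) (y := y - v) le_rfl (by omega) (by omega) (by omega) this
            omega
        · have := hblock x (by omega) hxb hnex
          rcases htail y (by omega) hy.2 with ⟨hy1, hy2⟩ | ⟨hy1, hy2, hy3⟩ <;> omega
      · -- x tail, y block
        exfalso
        rcases eq_or_ne (τ (y-1)) v with hey | hney
        · rw [heslot y (by omega) hyb hey] at hxy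
          rcases htail x (by omega) hx.2 with ⟨hx1', hx2'⟩ | ⟨hx1', hx2', hx3'⟩ <;>
            rcases hec with ⟨he1, he2⟩ | ⟨he1, he2, he3, he4, he5⟩
          · have := hωp.inj (x := 1) (y := x - v) le_rfl (by omega) (by omega) (by omega)
              (by omega)
            omega
          · omega
          · omega
          · have : ω 1 = ω (x - v) := by omega
            have := hωp.inj (x := 1) (y := x - v) le_rfl (by omega) (by omega) (by omega) this
            omega
        · have := hblock y (by omega) hyb hney
          rcases htail x (by omega) hx.2 with ⟨hx1', hx2'⟩ | ⟨hx1', hx2', hx3'⟩ <;> omega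
      · -- both tail
        rcases htail x (by omega) hx.2 with ⟨hx1', hx2'⟩ | ⟨hx1', hx2', hx3'⟩ <;>
          rcases htail y (by omega) hy.2 with ⟨hy1', hy2'⟩ | ⟨hy1', hy2', hy3'⟩
        · have := hωp.inj (x := x - v) (y := y - v) (by omega) (by omega) (by omega) (by omega)
            (by omega)
          omega
        · omega
        · omega
        · have : ω (x - v) = ω (y - v) := by omega
          have := hωp.inj (x := x - v) (y := y - v) (by omega) (by omega) (by omega) (by omega)
            this
          omega
  · -- surjOn
    intro y hy
    simp only [Set.mem_Icc] at hy
    rcases eq_or_ne y (v+1) with rfl | hyv1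
    · exact ⟨1, Set.mem_Icc.2 ⟨le_rfl, by omega⟩, Gmap_one m v τ ω⟩
    by_cases hyb : 2 ≤ y ∧ y ≤ v
    · -- y in [2, v] : from τ
      obtain ⟨i, hi1, hi2, hi3⟩ := hτp.surj (y := y - 1) (by omega) (by omega)
      have hne : τ (i + 1 - 1) ≠ v := by simpa using by rw [hi3]; omega
      refine ⟨i + 1, Set.mem_Icc.2 ⟨by omega, by omega⟩, ?_⟩
      have := hblock (i+1) (by omega) (by omega) hne
      simp only [Nat.add_sub_cancel] at this hne
      rw [this.1]
      simp only [Nat.add_sub_cancel, hi3]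
      omega
    rcases eq_or_ne y 1 with rfl | hy1
    · -- y = 1
      rcases hec with ⟨he1, he2⟩ | ⟨he1, he2, he3, he4, he5⟩
      · -- e = 1, sits at the e-slot
        obtain ⟨s, hs1, hs2, hs3⟩ := hτp.surj (y := v) hv le_rfl
        refine ⟨s + 1, Set.mem_Icc.2 ⟨by omega, by omega⟩, ?_⟩
        rw [heslot (s+1) (by omega) (by omega) (by simpa using hs3), he2]
      · -- value 1 is in the tail
        obtain ⟨j, hj1, hj2, hj3⟩ := hωp.surj (y := 1) le_rfl (by omega)
        have hjne : j ≠ 1 := by intro h; rw [h] at hj3; omega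
        refine ⟨v + j, Set.mem_Icc.2 ⟨by omega, by omega⟩, ?_⟩
        rw [Gmap_tail _ _ (by omega) (by omega)]
        simp only [Nat.add_sub_cancel_left]
        rw [if_pos hj3]
    · -- y in [v+2, m]
      have hy2 : v + 2 ≤ y := by omega
      obtain ⟨j, hj1, hj2, hj3⟩ := hωp.surj (y := y - v) (by omega) (by omega)
      rcases eq_or_ne j 1 with rfl | hjne
      · obtain ⟨s, hs1, hs2, hs3⟩ := hτp.surj (y := v) hv le_rfl
        refine ⟨s + 1, Set.mem_Icc.2 ⟨by omega, by omega⟩, ?_⟩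
        rw [heslot (s+1) (by omega) (by omega) (by simpa using hs3)]
        rcases hec with ⟨he1, he2⟩ | ⟨he1, he2, he3, he4, he5⟩ <;> omega
      · refine ⟨v + j, Set.mem_Icc.2 ⟨by omega, by omega⟩, ?_⟩
        rw [Gmap_tail _ _ (by omega) (by omega)]
        simp only [Nat.add_sub_cancel_left]
        rw [if_neg (show ¬ ω j = 1 by omega), hj3]
        omega
  · -- zero outside
    intro x hx
    simp only [Set.mem_Icc] at hx
    exact Gmap_out _ _ hvm (by omega)
  · -- Av
    rintro P Q ⟨h1, h2, h3⟩
    have hQm : 1 ≤ Q ∧ Q ≤ m := by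
      by_contra h
      rw [Gmap_out _ _ hvm h] at h1; omega
    have hPm : 1 ≤ P ∧ P ≤ m := by
      by_contra h
      rw [Gmap_out _ _ hvm h] at h2; omega
    rcases eq_or_ne Q 1 with rfl | hQ1
    · rw [Gmap_one] at h1; omega
    rcases eq_or_ne P 1 with rfl | hP1
    · -- G Q in (1, v+1), Q > v+1 : impossible since tail values are 1 or ≥ v+2
      rw [Gmap_one] at h2 h3
      rcases htail Q (by omega) hQm.2 with ⟨-, h⟩ | ⟨ha, hb, hc⟩ <;> omega
    by_cases hPb : P ≤ v + 1
    · rcases eq_or_ne (τ (P-1)) v with heP | hneP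
      · -- P is the e-slot
        rw [heslot P (by omega) hPb heP] at h2 h3
        rcases hec with ⟨he1, he2⟩ | ⟨he1, he2, he3, he4, he5⟩
        · omega
        · -- G P = v + ω 1 ≥ v + 2, so Q is in the tail
          rcases htail Q (by omega) (by omega) with ⟨ha, hb⟩ | ⟨ha, hb, hc⟩
          · omega
          · exact hωa 1 (Q - v) ⟨by omega, by omega, by omega⟩
      · -- P is a non-e block slot: G P ≤ v
        have hPv := hblock P (by omega) hPb hneP
        by_cases hQb : Q ≤ v + 1
        · rcases eq_or_ne (τ (Q-1)) v with heQ | hneQ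
          · rw [heslot Q (by omega) hQb heQ] at h1 h2
            rcases hec with ⟨he1, he2⟩ | ⟨he1, he2, he3, he4, he5⟩ <;> omega
          · have hQv := hblock Q (by omega) hQb hneQ
            exact hτa (P-1) (Q-1) ⟨by omega, by omega, by omega⟩
        · rcases htail Q (by omega) hQm.2 with ⟨ha, hb⟩ | ⟨ha, hb, hc⟩ <;> omega
    · -- P in the tail; then Q > G P > P ≥ v+2 also in the tail
      rcases htail P (by omega) hPm.2 with ⟨ha, hb⟩ | ⟨ha, hb, hc⟩
      · omega
      · rcases htail Q (by omega) (by omega) with ⟨ha', hb'⟩ | ⟨ha', hb', hc'⟩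
        · omega
        · exact hωa (P - v) (Q - v) ⟨by omega, by omega, by omega⟩

lemma val_block {m v : ℕ} (hvm : v + 1 ≤ m) {q : ℕ → ℕ} (hq : q ∈ Cl m v) :
    ∀ Q, 2 ≤ q Q → q Q ≤ v → (2 ≤ Q ∧ Q ≤ v + 1) := by
  obtain ⟨⟨hperm, hav⟩, hq1⟩ := hq
  intro Q h2 hqv
  have hQm : 1 ≤ Q ∧ Q ≤ m := by
    by_contra h
    rw [hperm.zero h] at h2; omega
  have hQ1 : Q ≠ 1 := by
    intro h; rw [h, hq1] at hqv; omega
  constructor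
  · omega
  · by_contra h
    exact hav 1 Q ⟨by omega, by rw [hq1]; omega, by rw [hq1]; omega⟩

lemma eslot_exists {m v : ℕ} (hv : 1 ≤ v) (hvm : v + 1 ≤ m) {q : ℕ → ℕ} (hq : q ∈ Cl m v) :
    ∃ s, 2 ≤ s ∧ s ≤ v + 1 ∧ ¬(2 ≤ q s ∧ q s ≤ v) ∧
      ∀ i, 2 ≤ i → i ≤ v + 1 → i ≠ s → (2 ≤ q i ∧ q i ≤ v) := by
  classical
  obtain ⟨⟨hperm, hav⟩, hq1⟩ := hq
  have hvb := val_block hvm ⟨⟨hperm, hav⟩, hq1⟩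
  set B : Finset ℕ := Finset.Icc 2 (v+1) with hB
  have hcard : (B.filter (fun i => 2 ≤ q i ∧ q i ≤ v)).card = v - 1 := by
    rw [show v - 1 = (Finset.Icc 2 v).card by rw [Nat.card_Icc]; omega]
    apply Finset.card_bij (fun a _ => q a)
    · intro a ha
      simp only [Finset.mem_filter] at ha
      simp only [Finset.mem_Icc]
      exact ha.2
    · intro a ha b hb hab
      simp only [hB, Finset.mem_filter, Finset.mem_Icc] at ha hb
      exact hperm.inj (by omega) (by omega) (by omega) (by omega) hab
    · intro b hb
      simp only [Finset.mem_Icc] at hb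
      obtain ⟨Q, hQ1, hQ2, hQ3⟩ := hperm.surj (y := b) (by omega) (by omega)
      have := hvb Q (by omega) (by omega)
      refine ⟨Q, ?_, hQ3⟩
      simp only [hB, Finset.mem_filter, Finset.mem_Icc]
      omega
  have hBcard : B.card = v := by rw [hB, Nat.card_Icc]; omega
  have hsplit := Finset.card_filter_add_card_filter_not
    (s := B) (p := fun i => 2 ≤ q i ∧ q i ≤ v)
  have hTcard : (B.filter (fun i => ¬(2 ≤ q i ∧ q i ≤ v))).card = 1 := by omega
  obtain ⟨s, hs⟩ := Finset.card_eq_one.1 hTcard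
  have hsmem : s ∈ B.filter (fun i => ¬(2 ≤ q i ∧ q i ≤ v)) := by rw [hs]; simp
  simp only [Finset.mem_filter, hB, Finset.mem_Icc] at hsmem
  refine ⟨s, hsmem.1.1, hsmem.1.2, hsmem.2, ?_⟩
  intro i hi1 hi2 hine
  by_contra h
  have : i ∈ B.filter (fun i => ¬(2 ≤ q i ∧ q i ≤ v)) := by
    simp only [Finset.mem_filter, hB, Finset.mem_Icc]
    exact ⟨⟨hi1, hi2⟩, h⟩
  rw [hs, Finset.mem_singleton] at this
  exact hine this

def tauOf (v s : ℕ) (q : ℕ → ℕ) : ℕ → ℕ :=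
  fun i => if 1 ≤ i ∧ i ≤ v then (if i + 1 = s then v else q (i+1) - 1) else 0

def omgOf (m v s : ℕ) (q : ℕ → ℕ) : ℕ → ℕ :=
  fun j => if j = 1 then (if q s = 1 then 1 else q s - v)
    else if 2 ≤ j ∧ j ≤ m - v then (if q (v+j) = 1 then 1 else q (v+j) - v) else 0

lemma tauOf_in {v s : ℕ} (q : ℕ → ℕ) {i : ℕ} (h1 : 1 ≤ i) (h2 : i ≤ v) :
    tauOf v s q i = if i + 1 = s then v else q (i+1) - 1 := by
  simp only [tauOf, if_pos (⟨h1, h2⟩ : 1 ≤ i ∧ i ≤ v)]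

lemma tauOf_out {v s : ℕ} (q : ℕ → ℕ) {i : ℕ} (h : ¬ (1 ≤ i ∧ i ≤ v)) :
    tauOf v s q i = 0 := by
  simp only [tauOf, if_neg h]

lemma omgOf_one {m v s : ℕ} (q : ℕ → ℕ) :
    omgOf m v s q 1 = if q s = 1 then 1 else q s - v := by
  simp [omgOf]

lemma omgOf_in {m v s : ℕ} (q : ℕ → ℕ) {j : ℕ} (h1 : 2 ≤ j) (h2 : j ≤ m - v) :
    omgOf m v s q j = if q (v+j) = 1 then 1 else q (v+j) - v := by
  simp only [omgOf, if_neg (show ¬ j = 1 by omega), if_pos (⟨h1, h2⟩ : 2 ≤ j ∧ j ≤ m - v)]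

lemma omgOf_out {m v s : ℕ} (q : ℕ → ℕ) {j : ℕ} (hmv : 1 ≤ m - v)
    (h : ¬ (1 ≤ j ∧ j ≤ m - v)) : omgOf m v s q j = 0 := by
  simp only [omgOf, if_neg (show ¬ j = 1 by omega)]
  rw [if_neg (show ¬ (2 ≤ j ∧ j ≤ m - v) by omega)]

section Backward

variable {m v s : ℕ} {q : ℕ → ℕ}

variable (hv : 1 ≤ v) (hvm : v + 1 ≤ m) (hperm : PermOn m q) (hav : Av q)
  (hq1 : q 1 = v + 1) (hs2 : 2 ≤ s) (hsv : s ≤ v + 1) (hse : ¬ (2 ≤ q s ∧ q s ≤ v))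
  (hsall : ∀ i, 2 ≤ i → i ≤ v + 1 → i ≠ s → (2 ≤ q i ∧ q i ≤ v))

include hv hvm hperm hq1 hs2 hsv hse in
lemma e_cases : q s = 1 ∨ (v + 2 ≤ q s ∧ q s ≤ m) := by
  have hsb := hperm.bounds (x := s) (by omega) (by omega)
  have hsne1 : q s ≠ v + 1 := by
    intro h
    have := hperm.inj (x := s) (y := 1) (by omega) (by omega) le_rfl (by omega)
      (by rw [h, hq1])
    omega
  omega

include hv hvm hperm hav hq1 hs2 hsv hse in
lemma tail_vals : ∀ x, v + 2 ≤ x → x ≤ m →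
    (q x = 1 ∨ (v + 2 ≤ q x ∧ q x ≤ m)) ∧ q x ≠ q s := by
  intro x hx1 hx2
  have hxb := hperm.bounds (x := x) (by omega) hx2
  have hne1 : q x ≠ v + 1 := by
    intro h
    have := hperm.inj (x := x) (y := 1) (by omega) (by omega) le_rfl (by omega)
      (by rw [h, hq1])
    omega
  have hnotmid : ¬ (2 ≤ q x ∧ q x ≤ v) := by
    rintro ⟨h1, h2⟩
    have := val_block hvm ⟨⟨hperm, hav⟩, hq1⟩ x h1 h2
    omega
  have hnes : q x ≠ q s := by
    intro h
    have := hperm.inj (x := x) (y := s) (by omega) (by omega) (by omega) (by omega) h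
    omega
  exact ⟨by omega, hnes⟩

include hv hvm hperm hav hq1 hs2 hsv hse hsall in
lemma tauOf_mem : tauOf v s q ∈ AP v := by
  constructor
  · refine ⟨⟨?_, ?_, ?_⟩, ?_⟩
    · intro i hi
      simp only [Set.mem_Icc] at hi ⊢
      rw [tauOf_in q hi.1 hi.2]
      rcases eq_or_ne (i+1) s with h | h
      · rw [if_pos h]; omega
      · rw [if_neg h]
        have := hsall (i+1) (by omega) (by omega) h
        omega
    · intro i hi j hj hij
      simp only [Set.mem_Icc] at hi hj
      rw [tauOf_in q hi.1 hi.2, tauOf_in q hj.1 hj.2] at hij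
      rcases eq_or_ne (i+1) s with h | h <;> rcases eq_or_ne (j+1) s with h' | h'
      · omega
      · rw [if_pos h, if_neg h'] at hij
        have := hsall (j+1) (by omega) (by omega) h'
        omega
      · rw [if_neg h, if_pos h'] at hij
        have := hsall (i+1) (by omega) (by omega) h
        omega
      · rw [if_neg h, if_neg h'] at hij
        have h1 := hsall (i+1) (by omega) (by omega) h
        have h2 := hsall (j+1) (by omega) (by omega) h'
        have : q (i+1) = q (j+1) := by omega
        have := hperm.inj (x := i+1) (y := j+1) (by omega) (by omega) (by omega) (by omega) this
        omega
    · intro y hy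
      simp only [Set.mem_Icc] at hy
      rcases eq_or_ne y v with rfl | hyv
      · refine ⟨s - 1, Set.mem_Icc.2 ⟨by omega, by omega⟩, ?_⟩
        rw [tauOf_in q (by omega) (by omega), if_pos (by omega)]
      · obtain ⟨Q, hQ1, hQ2, hQ3⟩ := hperm.surj (y := y + 1) (by omega) (by omega)
        have hQb := val_block hvm ⟨⟨hperm, hav⟩, hq1⟩ Q (by omega) (by omega)
        have hQs : Q ≠ s := by
          intro h; rw [h] at hQ3; omega
        refine ⟨Q - 1, Set.mem_Icc.2 ⟨by omega, by omega⟩, ?_⟩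
        rw [tauOf_in q (by omega) (by omega), if_neg (by omega : ¬ (Q - 1 + 1 = s)),
          show Q - 1 + 1 = Q by omega, hQ3]
        omega
    · intro i hi
      simp only [Set.mem_Icc] at hi
      exact tauOf_out q (by omega)
  · rintro i j ⟨h1, h2, h3⟩
    by_cases hj : 1 ≤ j ∧ j ≤ v
    · by_cases hi : 1 ≤ i ∧ i ≤ v
      · rw [tauOf_in q hi.1 hi.2] at h2 h3
        rw [tauOf_in q hj.1 hj.2] at h1 h2
        rcases eq_or_ne (i+1) s with h | h
        · rw [if_pos h] at h2 h3; omega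
        · rw [if_neg h] at h2 h3
          have hqi := hsall (i+1) (by omega) (by omega) h
          rcases eq_or_ne (j+1) s with h' | h'
          · rw [if_pos h'] at h1 h2; omega
          · rw [if_neg h'] at h1 h2
            have hqj := hsall (j+1) (by omega) (by omega) h'
            exact hav (i+1) (j+1) ⟨by omega, by omega, by omega⟩
      · rw [tauOf_out q hi] at h2 h3; omega
    · rw [tauOf_out q hj] at h1 h2; omega

include hv hvm hperm hav hq1 hs2 hsv hse hsall in
lemma omg_val : ∀ j, 1 ≤ j → j ≤ m - v →
    (q (if j = 1 then s else v + j) = 1 ∧ omgOf m v s q j = 1) ∨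
    (v + 2 ≤ q (if j = 1 then s else v + j) ∧ q (if j = 1 then s else v + j) ≤ m ∧
     omgOf m v s q j = q (if j = 1 then s else v + j) - v ∧
     2 ≤ omgOf m v s q j ∧ omgOf m v s q j ≤ m - v) := by
  have hec := e_cases hv hvm hperm hq1 hs2 hsv hse
  have htv := tail_vals hv hvm hperm hav hq1 hs2 hsv hse
  intro j hj1 hj2
  rcases eq_or_ne j 1 with rfl | hj
  · rw [if_pos rfl, omgOf_one]
    rcases hec with h | h
    · exact Or.inl ⟨h, by rw [if_pos h]⟩
    · refine Or.inr ⟨h.1, h.2, ?_⟩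
      rw [if_neg (by omega)]
      omega
  · rw [if_neg hj, omgOf_in q (by omega) hj2]
    rcases (htv (v + j) (by omega) (by omega)).1 with h | h
    · exact Or.inl ⟨h, by rw [if_pos h]⟩
    · refine Or.inr ⟨h.1, h.2, ?_⟩
      rw [if_neg (by omega)]
      omega

include hv hvm hperm hav hq1 hs2 hsv hse hsall in
lemma omgOf_mem : omgOf m v s q ∈ AP (m - v) := by
  have hval := omg_val hv hvm hperm hav hq1 hs2 hsv hse hsall
  have hposle : ∀ j : ℕ, 1 ≤ j → j ≤ m - v →
      1 ≤ (if j = 1 then s else v + j) ∧ (if j = 1 then s else v + j) ≤ m := by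
    intro j h1 h2
    rcases eq_or_ne j 1 with rfl | hj
    · rw [if_pos rfl]; omega
    · rw [if_neg hj]; omega
  constructor
  · refine ⟨⟨?_, ?_, ?_⟩, ?_⟩
    · intro j hj
      simp only [Set.mem_Icc] at hj ⊢
      rcases hval j hj.1 hj.2 with ⟨-, h⟩ | ⟨-, -, -, h⟩ <;> omega
    · intro i hi j hj hij
      simp only [Set.mem_Icc] at hi hj
      have hpi := hposle i hi.1 hi.2
      have hpj := hposle j hj.1 hj.2
      have hq : q (if i = 1 then s else v + i) = q (if j = 1 then s else v + j) := by
        rcases hval i hi.1 hi.2 with ⟨ha, hb⟩ | ⟨ha, hb, hc, hd⟩ <;>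
          rcases hval j hj.1 hj.2 with ⟨ha', hb'⟩ | ⟨ha', hb', hc', hd'⟩ <;> omega
      have := hperm.inj hpi.1 hpi.2 hpj.1 hpj.2 hq
      rcases eq_or_ne i 1 with rfl | hi1 <;> rcases eq_or_ne j 1 with rfl | hj1
      · rfl
      · rw [if_pos rfl, if_neg hj1] at this; omega
      · rw [if_neg hi1, if_pos rfl] at this; omega
      · rw [if_neg hi1, if_neg hj1] at this; omega
    · intro y hy
      simp only [Set.mem_Icc] at hy
      rcases eq_or_ne y 1 with rfl | hy1
      · obtain ⟨Q, hQ1, hQ2, hQ3⟩ := hperm.surj (y := 1) le_rfl (by omega)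
        have hQne1 : Q ≠ 1 := by intro h; rw [h, hq1] at hQ3; omega
        by_cases hQb : Q ≤ v + 1
        · have hQs : Q = s := by
            by_contra h
            have := hsall Q (by omega) hQb h
            omega
          rw [hQs] at hQ3
          refine ⟨1, Set.mem_Icc.2 ⟨le_rfl, by omega⟩, ?_⟩
          rcases hval 1 le_rfl (by omega) with ⟨-, h⟩ | ⟨h, -⟩
          · exact h
          · rw [if_pos rfl, hQ3] at h; omega
        · refine ⟨Q - v, Set.mem_Icc.2 ⟨by omega, by omega⟩, ?_⟩
          rcases hval (Q - v) (by omega) (by omega) with ⟨-, h⟩ | ⟨h, -⟩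
          · exact h
          · rw [if_neg (by omega), show v + (Q - v) = Q by omega, hQ3] at h; omega
      · obtain ⟨Q, hQ1, hQ2, hQ3⟩ := hperm.surj (y := v + y) (by omega) (by omega)
        have hQne1 : Q ≠ 1 := by intro h; rw [h, hq1] at hQ3; omega
        by_cases hQb : Q ≤ v + 1
        · have hQs : Q = s := by
            by_contra h
            have := hsall Q (by omega) hQb h
            omega
          rw [hQs] at hQ3
          refine ⟨1, Set.mem_Icc.2 ⟨le_rfl, by omega⟩, ?_⟩
          rcases hval 1 le_rfl (by omega) with ⟨h, -⟩ | ⟨-, -, h, h', -⟩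
          · rw [if_pos rfl, hQ3] at h; omega
          · rw [if_pos rfl, hQ3] at h
            omega
        · refine ⟨Q - v, Set.mem_Icc.2 ⟨by omega, by omega⟩, ?_⟩
          rcases hval (Q - v) (by omega) (by omega) with ⟨h, h'⟩ | ⟨-, -, h, -⟩ <;>
            rw [if_neg (by omega), show v + (Q - v) = Q by omega, hQ3] at h <;> omega
    · intro j hj
      simp only [Set.mem_Icc] at hj
      exact omgOf_out q (by omega) (by omega)
  · rintro i j ⟨h1, h2, h3⟩
    have hjr : 1 ≤ j ∧ j ≤ m - v := by
      by_contra h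
      rw [omgOf_out q (by omega) h] at h1; omega
    have hir : 1 ≤ i ∧ i ≤ m - v := by
      by_contra h
      rw [omgOf_out q (by omega) h] at h2; omega
    have hij : i < j := by omega
    have hji : j ≠ 1 := by omega
    rcases hval i hir.1 hir.2 with ⟨ha, hb⟩ | ⟨ha, hb, hc, hd, he⟩
    · omega
    · rcases hval j hjr.1 hjr.2 with ⟨ha', hb'⟩ | ⟨ha', hb', hc', hd', he'⟩
      · omega
      · rw [if_neg hji] at ha' hb' hc'
        refine hav (if i = 1 then s else v + i) (v + j) ⟨?_, ?_, ?_⟩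
        · rcases eq_or_ne i 1 with rfl | hi1
          · rw [if_pos rfl]; omega
          · rw [if_neg hi1]; omega
        · omega
        · omega

include hv hvm hperm hav hq1 hs2 hsv hse hsall in
lemma Gmap_eq : Gmap m v (tauOf v s q) (omgOf m v s q) = q := by
  have hec := e_cases hv hvm hperm hq1 hs2 hsv hse
  have htv := tail_vals hv hvm hperm hav hq1 hs2 hsv hse
  funext x
  rcases eq_or_ne x 0 with rfl | hx0
  · rw [show Gmap m v (tauOf v s q) (omgOf m v s q) 0 = 0 by simp [Gmap]]
    exact (hperm.zero (by omega)).symm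
  rcases eq_or_ne x 1 with rfl | hx1
  · rw [Gmap_one, hq1]
  by_cases hxb : x ≤ v + 1
  · -- block
    rw [Gmap_block _ _ (by omega) hxb, tauOf_in q (by omega) (by omega),
      show x - 1 + 1 = x by omega]
    rcases eq_or_ne x s with hxs | hxs
    · rw [if_pos hxs, if_pos rfl]
      simp only [eVal, omgOf_one, hxs]
      rcases hec with h | h
      · simp [h]
      · rw [if_neg (show ¬ (if q s = 1 then 1 else q s - v) = 1 by rw [if_neg (by omega)]; omega),
          if_neg (by omega)]
        omega
    · have hq' := hsall x (by omega) hxb hxs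
      rw [if_neg hxs, if_neg (show ¬ q x - 1 = v by omega)]
      omega
  by_cases hxm : x ≤ m
  · -- tail
    rw [Gmap_tail _ _ (by omega) hxm, omgOf_in q (by omega) (by omega),
      show v + (x - v) = x by omega]
    have := (htv x (by omega) hxm).1
    rcases eq_or_ne (q x) 1 with h | h
    · simp [h]
    · rw [if_neg h, if_neg (show ¬ q x - v = 1 by omega)]
      omega
  · rw [Gmap_out _ _ hvm (by omega)]
    exact (hperm.zero (by omega)).symm

end Backward

lemma Gmap_injOn {m v : ℕ} (hv : 1 ≤ v) (hvm : v + 1 ≤ m) :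
    Set.InjOn (fun τω : (ℕ → ℕ) × (ℕ → ℕ) => Gmap m v τω.1 τω.2) (AP v ×ˢ AP (m - v)) := by
  rintro ⟨τ, ω⟩ hτω ⟨τ', ω'⟩ hτω' h
  simp only [Set.mem_prod] at hτω hτω'
  obtain ⟨hτ, hω⟩ := hτω
  obtain ⟨hτ', hω'⟩ := hτω'
  dsimp only at h
  have hec := eVal_cases (m := m) hω hv hvm
  have hec' := eVal_cases (m := m) hω' hv hvm
  have htau : τ = τ' := by
    funext i
    by_cases hi : 1 ≤ i ∧ i ≤ v
    · have e := congrFun h (i+1)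
      rw [Gmap_block τ ω (by omega) (by omega), Gmap_block τ' ω' (by omega) (by omega)] at e
      simp only [Nat.add_sub_cancel] at e
      have hb := hτ.1.bounds (x := i) hi.1 hi.2
      have hb' := hτ'.1.bounds (x := i) hi.1 hi.2
      rcases eq_or_ne (τ i) v with h1 | h1 <;> rcases eq_or_ne (τ' i) v with h2 | h2
      · omega
      · rw [if_pos h1, if_neg h2] at e
        rcases hec with ⟨-, he⟩ | ⟨-, -, -, he, -⟩ <;> omega
      · rw [if_neg h1, if_pos h2] at e
        rcases hec' with ⟨-, he⟩ | ⟨-, -, -, he, -⟩ <;> omega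
      · rw [if_neg h1, if_neg h2] at e
        omega
    · rw [hτ.1.zero hi, hτ'.1.zero hi]
  have homg : ω = ω' := by
    funext j
    by_cases hj : 2 ≤ j ∧ j ≤ m - v
    · have e := congrFun h (v + j)
      rw [Gmap_tail τ ω (by omega) (by omega), Gmap_tail τ' ω' (by omega) (by omega)] at e
      simp only [Nat.add_sub_cancel_left] at e
      have hb := hω.1.bounds (x := j) (by omega) hj.2
      have hb' := hω'.1.bounds (x := j) (by omega) hj.2
      rcases eq_or_ne (ω j) 1 with h1 | h1 <;> rcases eq_or_ne (ω' j) 1 with h2 | h2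
      · omega
      · rw [if_pos h1, if_neg h2] at e; omega
      · rw [if_neg h1, if_pos h2] at e; omega
      · rw [if_neg h1, if_neg h2] at e; omega
    · rcases eq_or_ne j 1 with rfl | hj1
      · obtain ⟨s, hs1, hs2, hs3⟩ := hτ.1.surj (y := v) hv le_rfl
        have e := congrFun h (s+1)
        rw [Gmap_block τ ω (by omega) (by omega), Gmap_block τ' ω' (by omega) (by omega)] at e
        simp only [Nat.add_sub_cancel] at e
        rw [if_pos hs3, if_pos (htau ▸ hs3)] at e
        rcases hec with ⟨ha, hb⟩ | ⟨ha, hb, hc, hd, he⟩ <;>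
          rcases hec' with ⟨ha', hb'⟩ | ⟨ha', hb', hc', hd', he'⟩ <;> omega
      · rw [hω.1.zero (by omega), hω'.1.zero (by omega)]
  rw [Prod.mk.injEq]
  exact ⟨htau, homg⟩

lemma Cl_pos_eq {m v : ℕ} (hv : 1 ≤ v) (hvm : v + 1 ≤ m) :
    Cl m v = (fun τω : (ℕ → ℕ) × (ℕ → ℕ) => Gmap m v τω.1 τω.2) '' (AP v ×ˢ AP (m - v)) := by
  ext q
  constructor
  · intro hq
    obtain ⟨s, hs2, hsv, hse, hsall⟩ := eslot_exists hv hvm hq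
    obtain ⟨⟨hperm, hav⟩, hq1⟩ := hq
    exact ⟨⟨tauOf v s q, omgOf m v s q⟩,
      Set.mem_prod.2 ⟨tauOf_mem hv hvm hperm hav hq1 hs2 hsv hse hsall,
        omgOf_mem hv hvm hperm hav hq1 hs2 hsv hse hsall⟩,
      Gmap_eq hv hvm hperm hav hq1 hs2 hsv hse hsall⟩
  · rintro ⟨⟨τ, ω⟩, hmem, rfl⟩
    simp only [Set.mem_prod] at hmem
    exact Gmap_mem hv hvm hmem.1 hmem.2

lemma Cl_pos_ncard {m v : ℕ} (hv : 1 ≤ v) (hvm : v + 1 ≤ m) :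
    (Cl m v).ncard = apc v * apc (m - v) := by
  rw [Cl_pos_eq hv hvm, Set.ncard_image_of_injOn (Gmap_injOn hv hvm)]
  rw [← Nat.card_coe_set_eq, Nat.card_congr (Equiv.Set.prod _ _), Nat.card_prod,
    Nat.card_coe_set_eq, Nat.card_coe_set_eq]
  rfl

lemma apc_rec (n : ℕ) (hn : 1 ≤ n) :
    apc (n+1) = apc n + ∑ k ∈ Finset.range n, apc (k+1) * apc (n - k) := by
  rw [ncard_partition (n+1) (by omega), Finset.sum_range_succ']
  have h0 : (Cl (n+1) 0).ncard = apc n := by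
    have := Cl_zero_ncard (n+1) (by omega)
    simpa using this
  rw [h0, Nat.add_comm]
  congr 1
  apply Finset.sum_congr rfl
  intro k hk
  simp only [Finset.mem_range] at hk
  have := Cl_pos_ncard (m := n+1) (v := k+1) (by omega) (by omega)
  rw [this, show n + 1 - (k+1) = n - k by omega]

lemma apc_eq_r (r : ℕ → ℕ) (h0 : r 0 = 1)
    (hrec : ∀ n, 1 ≤ n → r n = r (n - 1) + ∑ k ∈ Finset.range n, r k * r (n - 1 - k)) :
    ∀ n, apc (n + 1) = r n := by
  intro n
  induction n using Nat.strong_induction_on with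
  | _ n ih =>
    rcases Nat.eq_zero_or_pos n with rfl | hn
    · rw [apc_one, h0]
    · rw [apc_rec n hn, hrec n hn]
      congr 1
      · rw [show n = n - 1 + 1 by omega] ; rw [ih (n-1) (by omega)]
        congr 1 <;> omega
      · apply Finset.sum_congr rfl
        intro k hk
        simp only [Finset.mem_range] at hk
        rw [ih k (by omega), show n - k = (n - 1 - k) + 1 by omega, ih (n - 1 - k) (by omega)]

lemma good_eq_AP (n : ℕ) : {p : ℕ → ℕ | GoodPerm n p} = AP (n + 1) := by
  ext p
  exact goodPerm_iff

/-- the involution swapping values 1 and n+1 -/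
def swp (n : ℕ) (t : ℕ) : ℕ := if t = 1 then n + 1 else if t = n + 1 then 1 else t

lemma swp_invol (n : ℕ) (t : ℕ) : swp n (swp n t) = t := by
  unfold swp
  split_ifs <;> try omega

lemma swp_mem_AP {n : ℕ} (hn : 1 ≤ n) {p : ℕ → ℕ} (hp : p ∈ AP (n+1)) :
    (fun x => swp n (p x)) ∈ AP (n+1) := by
  obtain ⟨hperm, hav⟩ := hp
  have hsb : ∀ y, 1 ≤ y → y ≤ n + 1 → 1 ≤ swp n y ∧ swp n y ≤ n + 1 := by
    intro y h1 h2
    unfold swp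
    rcases eq_or_ne y 1 with rfl | hy1
    · simp
    · rw [if_neg hy1]
      rcases eq_or_ne y (n+1) with rfl | hy2
      · simp
      · rw [if_neg hy2]; omega
  have hswp0 : swp n 0 = 0 := by
    unfold swp
    rw [if_neg (show ¬ (0:ℕ) = 1 by omega), if_neg (show ¬ (0:ℕ) = n + 1 by omega)]
  have hmid : ∀ y, 2 ≤ swp n y → swp n y ≤ n → swp n y = y := by
    intro y h1 h2
    unfold swp at h1 h2 ⊢
    rcases eq_or_ne y 1 with rfl | hy1
    · rw [if_pos rfl] at h2; omega
    · rw [if_neg hy1] at h1 h2 ⊢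
      rcases eq_or_ne y (n+1) with rfl | hy2
      · rw [if_pos rfl] at h1; omega
      · rw [if_neg hy2]
  refine ⟨⟨⟨?_, ?_, ?_⟩, ?_⟩, ?_⟩
  · intro x hx
    simp only [Set.mem_Icc] at hx ⊢
    have := hperm.bounds hx.1 hx.2
    exact hsb _ this.1 this.2
  · intro x hx y hy hxy
    simp only [Set.mem_Icc] at hx hy
    dsimp only at hxy
    have h1 := hperm.bounds hx.1 hx.2
    have h2 := hperm.bounds hy.1 hy.2
    have : p x = p y := by
      have := congrArg (swp n) hxy
      rw [swp_invol, swp_invol] at this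
      exact this
    exact hperm.inj hx.1 hx.2 hy.1 hy.2 this
  · intro y hy
    simp only [Set.mem_Icc] at hy
    have hsy := hsb y hy.1 hy.2
    obtain ⟨x, hx1, hx2, hx3⟩ := hperm.surj (y := swp n y) hsy.1 hsy.2
    refine ⟨x, Set.mem_Icc.2 ⟨hx1, hx2⟩, ?_⟩
    dsimp only
    rw [hx3, swp_invol]
  · intro x hx
    simp only [Set.mem_Icc] at hx
    have := hperm.zero (x := x) (by omega)
    dsimp only
    rw [this, hswp0]
  · rintro P Q ⟨h1, h2, h3⟩
    dsimp only at h1 h2 h3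
    have hQm : 1 ≤ Q ∧ Q ≤ n + 1 := by
      by_contra h
      rw [hperm.zero h, hswp0] at h1
      omega
    have hPm : 1 ≤ P ∧ P ≤ n + 1 := by
      by_contra h
      rw [hperm.zero h, hswp0] at h2
      omega
    have e1 : swp n (p Q) = p Q := hmid (p Q) (by omega) (by omega)
    have e2 : swp n (p P) = p P := hmid (p P) (by omega) (by omega)
    exact hav P Q ⟨by omega, by omega, by omega⟩

lemma swp_one (n : ℕ) : swp n 1 = n + 1 := by simp [swp]

lemma swp_top (n : ℕ) (hn : 1 ≤ n) : swp n (n+1) = 1 := by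
  unfold swp
  rw [if_neg (show ¬ n + 1 = 1 by omega), if_pos rfl]

theorem stmt_9' (r : ℕ → ℕ) (h0 : r 0 = 1)
    (hrec : ∀ n, 1 ≤ n → r n = r (n - 1) + ∑ k ∈ Finset.range n, r k * r (n - 1 - k)) :
    (∀ n, Set.ncard {p : ℕ → ℕ | GoodPerm n p} = r n) ∧
    (∀ n, 1 ≤ n → Set.ncard {p : ℕ → ℕ | GoodPerm n p ∧
      ∃ x y, 1 ≤ x ∧ x ≤ n + 1 ∧ 1 ≤ y ∧ y ≤ n + 1 ∧
        p x = n + 1 ∧ p y = 1 ∧ x < y} = r n / 2) := by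
  have hpart1 : ∀ n, Set.ncard {p : ℕ → ℕ | GoodPerm n p} = r n := by
    intro n
    rw [good_eq_AP]
    exact apc_eq_r r h0 hrec n
  refine ⟨hpart1, ?_⟩
  intro n hn
  set S : Set (ℕ → ℕ) := {p : ℕ → ℕ | GoodPerm n p ∧
      ∃ x y, 1 ≤ x ∧ x ≤ n + 1 ∧ 1 ≤ y ∧ y ≤ n + 1 ∧
        p x = n + 1 ∧ p y = 1 ∧ x < y} with hS
  set T : Set (ℕ → ℕ) := {p : ℕ → ℕ | GoodPerm n p ∧
      ∃ x y, 1 ≤ x ∧ x ≤ n + 1 ∧ 1 ≤ y ∧ y ≤ n + 1 ∧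
        p x = n + 1 ∧ p y = 1 ∧ y < x} with hT
  have hGswp : ∀ p : ℕ → ℕ, GoodPerm n p → GoodPerm n (fun x => swp n (p x)) := by
    intro p hp
    exact goodPerm_iff.2 (swp_mem_AP hn (goodPerm_iff.1 hp))
  have hinvol : ∀ p : ℕ → ℕ, (fun x => swp n ((fun y => swp n (p y)) x)) = p := by
    intro p
    funext x
    exact swp_invol n (p x)
  -- S and T are mapped to each other
  have hTS : ∀ p ∈ S, (fun x => swp n (p x)) ∈ T := by
    rintro p ⟨hp, x, y, hx1, hx2, hy1, hy2, hpx, hpy, hxy⟩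
    refine ⟨hGswp p hp, y, x, hy1, hy2, hx1, hx2, ?_, ?_, hxy⟩
    · dsimp only; rw [hpy, swp_one]
    · dsimp only; rw [hpx, swp_top n hn]
  have hST : ∀ p ∈ T, (fun x => swp n (p x)) ∈ S := by
    rintro p ⟨hp, x, y, hx1, hx2, hy1, hy2, hpx, hpy, hxy⟩
    refine ⟨hGswp p hp, y, x, hy1, hy2, hx1, hx2, ?_, ?_, hxy⟩
    · dsimp only; rw [hpy, swp_one]
    · dsimp only; rw [hpx, swp_top n hn]
  have hTimg : T = (fun (p : ℕ → ℕ) (x : ℕ) => swp n (p x)) '' S := by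
    ext p
    constructor
    · intro hp
      refine ⟨fun x => swp n (p x), hST p hp, hinvol p⟩
    · rintro ⟨q, hq, rfl⟩
      exact hTS q hq
  have hunion : {p : ℕ → ℕ | GoodPerm n p} = S ∪ T := by
    ext p
    simp only [Set.mem_setOf_eq, Set.mem_union, hS, hT]
    constructor
    · intro hp
      have hperm : PermOn (n+1) p := (goodPerm_iff.1 hp).1
      obtain ⟨x, hx1, hx2, hx3⟩ := hperm.surj (y := n + 1) (by omega) le_rfl
      obtain ⟨y, hy1, hy2, hy3⟩ := hperm.surj (y := 1) le_rfl (by omega)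
      have hne : x ≠ y := by
        intro h
        rw [h, hy3] at hx3
        omega
      rcases Nat.lt_or_ge x y with h | h
      · exact Or.inl ⟨hp, x, y, hx1, hx2, hy1, hy2, hx3, hy3, h⟩
      · exact Or.inr ⟨hp, x, y, hx1, hx2, hy1, hy2, hx3, hy3, by omega⟩
    · rintro (⟨hp, -⟩ | ⟨hp, -⟩) <;> exact hp
  have hdisj : Disjoint S T := by
    rw [Set.disjoint_left]
    rintro p ⟨hp, x, y, hx1, hx2, hy1, hy2, hpx, hpy, hxy⟩
      ⟨-, x', y', hx1', hx2', hy1', hy2', hpx', hpy', hxy'⟩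
    have hperm : PermOn (n+1) p := (goodPerm_iff.1 hp).1
    have hxx : x = x' := hperm.inj hx1 hx2 hx1' hx2' (by rw [hpx, hpx'])
    have hyy : y = y' := hperm.inj hy1 hy2 hy1' hy2' (by rw [hpy, hpy'])
    omega
  have hSfin : S.Finite := by
    apply (AP_finite (n+1)).subset
    rintro p ⟨hp, -⟩
    exact goodPerm_iff.1 hp
  have hTfin : T.Finite := by
    apply (AP_finite (n+1)).subset
    rintro p ⟨hp, -⟩
    exact goodPerm_iff.1 hp
  have hinj : Set.InjOn (fun (p : ℕ → ℕ) (x : ℕ) => swp n (p x)) S := by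
    intro p hp q hq h
    have := congrArg (fun (f : ℕ → ℕ) (x : ℕ) => swp n (f x)) h
    dsimp only at this
    rw [hinvol p, hinvol q] at this
    exact this
  have hcards : r n = S.ncard + T.ncard := by
    rw [← hpart1 n, hunion, Set.ncard_union_eq hdisj hSfin hTfin]
  have hTcard : T.ncard = S.ncard := by
    rw [hTimg, Set.ncard_image_of_injOn hinj]
  omega

/-- The number of permutations of `{1, ..., n+1}` satisfying the smoothness condition is
the large Schröder number `r n`, and the number of those with `π⁻¹(n+1) < π⁻¹(1)` is
the small Schröder number `r n / 2`. -/
theorem stmt_9 (r : ℕ → ℕ) (h0 : r 0 = 1)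
    (hrec : ∀ n, 1 ≤ n → r n = r (n - 1) + ∑ k ∈ Finset.range n, r k * r (n - 1 - k)) :
    (∀ n, Set.ncard {p : ℕ → ℕ | GoodPerm n p} = r n) ∧
    (∀ n, 1 ≤ n → Set.ncard {p : ℕ → ℕ | GoodPerm n p ∧
      ∃ x y, 1 ≤ x ∧ x ≤ n + 1 ∧ 1 ≤ y ∧ y ≤ n + 1 ∧
        p x = n + 1 ∧ p y = 1 ∧ x < y} = r n / 2) := by
  exact stmt_9' r h0 hrec
end

section
/- For every n ≥ 1, the q-Schröder polynomial r_n(q) = Σ_P q^{diag(P)} (sum over Schröder paths of size n, diag(P) the number of diagonal steps) is divisible by 1+q in Z[q]. -/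
open Polynomial in
/-- A Schröder path of size `n`: a lattice path from `(0,0)` to `(n,n)` with steps
`(1,0)`, `(0,1)`, `(1,1)`, staying weakly below the diagonal. -/
def IsSchroederPath (n : ℕ) (P : List (ℕ × ℕ)) : Prop :=
  (∀ s ∈ P, s = (1, 0) ∨ s = (0, 1) ∨ s = (1, 1)) ∧
  (∀ k ≤ P.length, ((P.take k).map Prod.snd).sum ≤ ((P.take k).map Prod.fst).sum) ∧
  (P.map Prod.fst).sum = n ∧ (P.map Prod.snd).sum = n

/-- The number of diagonal `(1,1)` steps of a path. -/
def diagSteps (P : List (ℕ × ℕ)) : ℕ := (P.filter (fun s => s = (1, 1))).length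

open Polynomial in
/-- The `q`-Schröder polynomial `r_n(q) = ∑_P q^(diag P)`, summed over all Schröder
paths of size `n`. -/
noncomputable def schroederPoly (n : ℕ) : Polynomial ℤ :=
  ∑ᶠ (P : List (ℕ × ℕ)) (_ : IsSchroederPath n P), X ^ diagSteps P

/-! ### The toggle involution -/

/-- Swap the first diagonal step or east-north pair. -/
def togl : List (ℕ × ℕ) → List (ℕ × ℕ)
  | [] => []
  | (1, 1) :: t => (1, 0) :: (0, 1) :: t
  | (1, 0) :: (0, 1) :: t => (1, 1) :: t
  | s :: t => s :: togl t

/-- A list is good if it contains a diagonal step or an adjacent EN pair. -/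
def Good : List (ℕ × ℕ) → Prop
  | [] => False
  | (1, 1) :: _ => True
  | (1, 0) :: (0, 1) :: _ => True
  | _ :: t => Good t

lemma good_cons (s : ℕ × ℕ) (t : List (ℕ × ℕ)) (h : Good t) : Good (s :: t) := by
  rw [Good.eq_def]
  split <;> simp_all

lemma togl_head (t t1 : List (ℕ × ℕ)) (hc : togl t = (0, 1) :: t1) :
    ∃ t2, t = (0, 1) :: t2 := by
  rw [togl.eq_def] at hc
  split at hc <;> simp_all [Prod.ext_iff]

lemma togl_togl (l : List (ℕ × ℕ)) (h : Good l) : togl (togl l) = l := by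
  induction l using togl.induct with
  | case1 => exact absurd h id
  | case2 t => rfl
  | case3 t => rfl
  | case4 s t h1 h2 ih =>
    rw [Good.eq_4 s t h1 h2] at h
    have h2' : ∀ (t_1 : List (ℕ × ℕ)), s = (1, 0) → togl t = (0, 1) :: t_1 → False := by
      intro t1 hs hc
      obtain ⟨t2, ht2⟩ := togl_head t t1 hc
      exact h2 t2 hs ht2
    rw [togl.eq_4 s t h1 h2, togl.eq_4 s (togl t) h1 h2', ih h]

lemma diag_cons_D (t : List (ℕ × ℕ)) : diagSteps ((1, 1) :: t) = diagSteps t + 1 := by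
  simp [diagSteps]

lemma diag_cons_ne (s : ℕ × ℕ) (t : List (ℕ × ℕ)) (h : s ≠ (1, 1)) :
    diagSteps (s :: t) = diagSteps t := by
  have h' : s ≠ 1 := h
  simp [diagSteps, List.filter_cons, h, h']

lemma diag_togl (l : List (ℕ × ℕ)) (h : Good l) :
    diagSteps (togl l) = diagSteps l + 1 ∨ diagSteps l = diagSteps (togl l) + 1 := by
  induction l using togl.induct with
  | case1 => exact absurd h id
  | case2 t =>
    right
    rw [show togl ((1,1) :: t) = (1,0) :: (0,1) :: t from rfl, diag_cons_D,
      diag_cons_ne _ _ (by decide), diag_cons_ne _ _ (by decide)]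
  | case3 t =>
    left
    rw [show togl ((1,0) :: (0,1) :: t) = (1,1) :: t from rfl, diag_cons_D,
      diag_cons_ne _ _ (by decide), diag_cons_ne _ _ (by decide)]
  | case4 s t h1 h2 ih =>
    rw [Good.eq_4 s t h1 h2] at h
    rw [togl.eq_4 s t h1 h2, diag_cons_ne s _ h1, diag_cons_ne s _ h1]
    exact ih h

lemma sum_fst_togl (l : List (ℕ × ℕ)) :
    ((togl l).map Prod.fst).sum = (l.map Prod.fst).sum := by
  induction l using togl.induct with
  | case1 => rfl
  | case2 t => rw [show togl ((1,1) :: t) = (1,0) :: (0,1) :: t from rfl]; simp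
  | case3 t => rw [show togl ((1,0) :: (0,1) :: t) = (1,1) :: t from rfl]; simp
  | case4 s t h1 h2 ih => rw [togl.eq_4 s t h1 h2]; simp [ih]

lemma sum_snd_togl (l : List (ℕ × ℕ)) :
    ((togl l).map Prod.snd).sum = (l.map Prod.snd).sum := by
  induction l using togl.induct with
  | case1 => rfl
  | case2 t => rw [show togl ((1,1) :: t) = (1,0) :: (0,1) :: t from rfl]; simp
  | case3 t => rw [show togl ((1,0) :: (0,1) :: t) = (1,1) :: t from rfl]; simp
  | case4 s t h1 h2 ih => rw [togl.eq_4 s t h1 h2]; simp [ih]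

lemma allowed_togl (l : List (ℕ × ℕ))
    (h : ∀ s ∈ l, s = (1, 0) ∨ s = (0, 1) ∨ s = (1, 1)) :
    ∀ s ∈ togl l, s = (1, 0) ∨ s = (0, 1) ∨ s = (1, 1) := by
  induction l using togl.induct with
  | case1 => exact h
  | case2 t =>
    rw [show togl ((1,1) :: t) = (1,0) :: (0,1) :: t from rfl]
    intro s hs
    simp only [List.mem_cons] at hs
    rcases hs with rfl | rfl | hs
    · left; rfl
    · right; left; rfl
    · exact h s (by simp [hs])
  | case3 t =>
    rw [show togl ((1,0) :: (0,1) :: t) = (1,1) :: t from rfl]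
    intro s hs
    simp only [List.mem_cons] at hs
    rcases hs with rfl | hs
    · right; right; rfl
    · exact h s (by simp [hs])
  | case4 s t h1 h2 ih =>
    rw [togl.eq_4 s t h1 h2]
    intro x hx
    simp only [List.mem_cons] at hx
    rcases hx with rfl | hx
    · exact h x (by simp)
    · exact ih (fun y hy => h y (by simp [hy])) x hx

/-- Prefix condition with slack. -/
def SubD (a b : ℕ) (l : List (ℕ × ℕ)) : Prop :=
  ∀ k ≤ l.length, b + ((l.take k).map Prod.snd).sum ≤ a + ((l.take k).map Prod.fst).sum

lemma subd_cons {a b : ℕ} {s : ℕ × ℕ} {t : List (ℕ × ℕ)} :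
    SubD a b (s :: t) ↔ b ≤ a ∧ SubD (a + s.1) (b + s.2) t := by
  constructor
  · intro h
    refine ⟨by simpa using h 0 (by simp), fun k hk => ?_⟩
    have := h (k + 1) (by simpa using Nat.succ_le_succ hk)
    simp only [List.take_succ_cons, List.map_cons, List.sum_cons] at this
    omega
  · rintro ⟨h0, h⟩ k hk
    cases k with
    | zero => simpa using h0
    | succ k =>
      have := h k (by simpa using hk)
      simp only [List.take_succ_cons, List.map_cons, List.sum_cons]
      omega

lemma subd_togl (l : List (ℕ × ℕ)) : ∀ a b, SubD a b l → SubD a b (togl l) := by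
  induction l using togl.induct with
  | case1 => exact fun a b h => h
  | case2 t =>
    intro a b h
    rw [subd_cons] at h
    rw [show togl ((1,1) :: t) = (1,0) :: (0,1) :: t from rfl, subd_cons, subd_cons]
    refine ⟨h.1, by omega, ?_⟩
    have := h.2
    simpa using this
  | case3 t =>
    intro a b h
    rw [subd_cons, subd_cons] at h
    rw [show togl ((1,0) :: (0,1) :: t) = (1,1) :: t from rfl, subd_cons]
    refine ⟨h.1, ?_⟩
    have := h.2.2
    simpa using this
  | case4 s t h1 h2 ih =>
    intro a b h
    rw [subd_cons] at h
    rw [togl.eq_4 s t h1 h2, subd_cons]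
    exact ⟨h.1, ih _ _ h.2⟩

lemma notGood_shape (l : List (ℕ × ℕ))
    (hall : ∀ s ∈ l, s = (1, 0) ∨ s = (0, 1) ∨ s = (1, 1)) (h : ¬ Good l) :
    ∃ i j, l = List.replicate i ((0, 1) : ℕ × ℕ) ++ List.replicate j (1, 0) := by
  induction l with
  | nil => exact ⟨0, 0, rfl⟩
  | cons s t ih =>
    have hng : ¬ Good t := fun hg => h (good_cons s t hg)
    obtain ⟨i, j, rfl⟩ := ih (fun x hx => hall x (by simp [hx])) hng
    rcases hall s (by simp) with rfl | rfl | rfl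
    · have hi : i = 0 := by
        by_contra hi
        obtain ⟨i', rfl⟩ := Nat.exists_eq_succ_of_ne_zero hi
        rw [List.replicate_succ] at h
        exact h (by rw [List.cons_append, Good.eq_3]; trivial)
      subst hi
      exact ⟨0, j + 1, by simp [List.replicate_succ]⟩
    · exact ⟨i + 1, j, by simp [List.replicate_succ]⟩
    · exact absurd (show Good _ by rw [Good.eq_2]; trivial) h
    -- note: order of cases matches the disjunction (1,0), (0,1), (1,1)

lemma good_of_schroeder {n : ℕ} (hn : 1 ≤ n) {l : List (ℕ × ℕ)}
    (h : IsSchroederPath n l) : Good l := by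
  by_contra hg
  obtain ⟨hall, hpre, hfst, hsnd⟩ := h
  obtain ⟨i, j, rfl⟩ := notGood_shape l hall hg
  have hi : i = 0 := by
    have := hpre i (by simp)
    rw [List.take_append_of_le_length (by simp)] at this
    simpa using this
  subst hi
  simp at hsnd
  omega

lemma togl_schroeder {n : ℕ} {l : List (ℕ × ℕ)} (h : IsSchroederPath n l) :
    IsSchroederPath n (togl l) := by
  obtain ⟨hall, hpre, hfst, hsnd⟩ := h
  refine ⟨allowed_togl l hall, ?_, by rw [sum_fst_togl]; exact hfst,
    by rw [sum_snd_togl]; exact hsnd⟩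
  have : SubD 0 0 l := fun k hk => by simpa using hpre k hk
  have := subd_togl l 0 0 this
  intro k hk
  simpa using this k hk

/-- The set of Schröder paths of size `n` is finite. -/
lemma schroeder_finite (n : ℕ) : {P : List (ℕ × ℕ) | IsSchroederPath n P}.Finite := by
  have hsum : ∀ l : List (ℕ × ℕ),
      (l.map (fun s => s.1 + s.2)).sum = (l.map Prod.fst).sum + (l.map Prod.snd).sum := by
    intro l
    induction l with
    | nil => rfl
    | cons s t ih => simp [ih]; omega
  apply Set.Finite.subset
    (Set.Finite.image (fun l : List (Fin 2 × Fin 2) => l.map (fun p => ((p.1 : ℕ), (p.2 : ℕ))))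
      (List.finite_length_le (Fin 2 × Fin 2) (2 * n)))
  intro P hP
  obtain ⟨hall, _, hfst, hsnd⟩ := hP
  have hbound : ∀ s ∈ P, s.1 < 2 ∧ s.2 < 2 := by
    intro s hs
    rcases hall s hs with rfl | rfl | rfl <;> simp
  refine ⟨P.map (fun s => (⟨min s.1 1, by omega⟩, ⟨min s.2 1, by omega⟩)), ?_, ?_⟩
  · show _ ≤ 2 * n
    rw [List.length_map]
    have h1 : P.length ≤ (P.map (fun s => s.1 + s.2)).sum := by
      have := List.length_le_sum_of_one_le (P.map (fun s => s.1 + s.2)) ?_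
      · simpa using this
      · intro i hi
        simp only [List.mem_map] at hi
        obtain ⟨s, hs, rfl⟩ := hi
        rcases hall s hs with rfl | rfl | rfl <;> simp
    rw [hsum, hfst, hsnd] at h1
    omega
  · simp only [List.map_map]
    refine (List.map_congr_left fun x hx => ?_).trans (List.map_id P)
    rcases hall x hx with rfl | rfl | rfl <;> rfl

open Polynomial in
/-- For every `n ≥ 1` the `q`-Schröder polynomial `r_n(q)` is divisible by `1 + q`. -/
theorem stmt_11 (n : ℕ) (hn : 1 ≤ n) : (1 + X) ∣ schroederPoly n := by
  classical
  have hfin := schroeder_finite n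
  have hS : schroederPoly n = ∑ P ∈ hfin.toFinset, (X : Polynomial ℤ) ^ diagSteps P := by
    rw [show schroederPoly n
        = ∑ᶠ P ∈ {P : List (ℕ × ℕ) | IsSchroederPath n P}, (X : Polynomial ℤ) ^ diagSteps P
      from rfl]
    exact finsum_mem_eq_finite_toFinset_sum _ hfin
  rw [show (1 + X : Polynomial ℤ) = X - Polynomial.C (-1) by simp [add_comm], Polynomial.dvd_iff_isRoot,
    Polynomial.IsRoot, hS, Polynomial.eval_finset_sum]
  simp only [Polynomial.eval_pow, Polynomial.eval_X]
  refine Finset.sum_involution (fun P _ => togl P) ?_ ?_ ?_ ?_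
  · intro P hP
    rw [Set.Finite.mem_toFinset] at hP
    rcases diag_togl P (good_of_schroeder hn hP) with h | h <;> rw [h] <;> ring
  · intro P hP _
    rw [Set.Finite.mem_toFinset] at hP
    intro hc
    have hc' : togl P = P := hc
    rcases diag_togl P (good_of_schroeder hn hP) with h | h <;> rw [hc'] at h <;> omega
  · intro P hP
    rw [Set.Finite.mem_toFinset] at hP ⊢
    exact togl_schroeder hP
  · intro P hP
    rw [Set.Finite.mem_toFinset] at hP
    exact togl_togl P (good_of_schroeder hn hP)
end

section
/- For an admissible collection S of length n with S_1 = {1}, let S' be the length-(n-1) collection defined by S'_i = { j-1 : j ∈ S_{i+1}, j ≥ 2 } (removing 1 and shifting down). Then S' is admissible, and the dimension statistic satisfies d(S) = d(S') + n, where d(S) = N_PI(S) + N_PP(S) + N_II(S) with N_PI, N_PP, N_II as defined from S. -/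
/-- A collection `S` of subsets `S 1, ..., S n` of `{1, ..., n+1}` is admissible if
`#S i = i` and `S k ⊆ S (k+1) ∪ {k+1}`; `S i = ∅` outside the range `1 ≤ i ≤ n`. -/
def IsAdmissible (n : ℕ) (S : ℕ → Finset ℕ) : Prop :=
  (∀ i, i = 0 ∨ n < i → S i = ∅) ∧
  (∀ i, 1 ≤ i → i ≤ n → S i ⊆ Finset.Icc 1 (n + 1) ∧ (S i).card = i) ∧
  (∀ k, 1 ≤ k → k < n → S k ⊆ S (k + 1) ∪ {k + 1})

/-- `N_PI(S)`: pairs `1 ≤ k < l ≤ n+1` such that `k ∈ S t`, `l ∉ S t` for some `k ≤ t < l`. -/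
def NPI (n : ℕ) (S : ℕ → Finset ℕ) : ℕ :=
  ((Finset.Icc 1 (n + 1) ×ˢ Finset.Icc 1 (n + 1)).filter
    (fun p => p.1 < p.2 ∧ ∃ t ∈ Finset.Ico p.1 p.2, p.1 ∈ S t ∧ p.2 ∉ S t)).card

/-- `N_PP(S)`: pairs `1 ≤ k < l ≤ n` such that `l ∈ S t`, `k ∉ S t` for some `t ≥ l`. -/
def NPP (n : ℕ) (S : ℕ → Finset ℕ) : ℕ :=
  ((Finset.Icc 1 n ×ˢ Finset.Icc 1 n).filter
    (fun p => p.1 < p.2 ∧ ∃ t ∈ Finset.Icc p.2 n, p.2 ∈ S t ∧ p.1 ∉ S t)).card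

/-- `N_II(S)`: pairs `2 ≤ k < l ≤ n+1` such that `l ∈ S t`, `k ∉ S t` for some `t < k`. -/
def NII (n : ℕ) (S : ℕ → Finset ℕ) : ℕ :=
  ((Finset.Icc 2 (n + 1) ×ˢ Finset.Icc 2 (n + 1)).filter
    (fun p => p.1 < p.2 ∧ ∃ t ∈ Finset.Ico 1 p.1, p.2 ∈ S t ∧ p.1 ∉ S t)).card

/-- For an admissible collection with `S 1 = {1}`, the shifted collection
`S' i = {j - 1 : j ∈ S (i+1), j ≥ 2}` is admissible of length `n - 1` and the
dimension statistic satisfies `d(S) = d(S') + n`. -/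
theorem stmt_14 (n : ℕ) (hn : 1 ≤ n) (S : ℕ → Finset ℕ) (hS : IsAdmissible n S)
    (h1 : S 1 = {1})
    (S' : ℕ → Finset ℕ)
    (hS' : S' = fun i => if 1 ≤ i ∧ i ≤ n - 1 then
      ((S (i + 1)).filter (fun j => 2 ≤ j)).image (fun j => j - 1) else ∅) :
    IsAdmissible (n - 1) S' ∧
    NPI n S + NPP n S + NII n S =
      (NPI (n - 1) S' + NPP (n - 1) S' + NII (n - 1) S') + n := by
  obtain ⟨hout, hcard, hchain⟩ := hS
  have hSsub : ∀ i, 1 ≤ i → i ≤ n → ∀ j ∈ S i, 1 ≤ j ∧ j ≤ n + 1 := by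
    intro i hi1 hi2 j hj
    have := (hcard i hi1 hi2).1 hj
    simpa [Finset.mem_Icc] using this
  have h1mem : ∀ t, 1 ≤ t → t ≤ n → 1 ∈ S t := by
    intro t
    induction t with
    | zero => intro h; omega
    | succ t ih =>
      intro _ htn
      rcases Nat.eq_zero_or_pos t with rfl | ht
      · rw [h1]; simp
      · have h1t : 1 ∈ S t := ih (by omega) (by omega)
        have := hchain t (by omega) (by omega) h1t
        rcases Finset.mem_union.mp this with h | h
        · exact h
        · simp at h; omega
  have hshift : ∀ t, 1 ≤ t → t ≤ n - 1 → ∀ j, (j ∈ S' t ↔ 1 ≤ j ∧ j + 1 ∈ S (t + 1)) := by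
    intro t ht1 ht2 j
    rw [hS']
    simp only [if_pos (⟨ht1, ht2⟩ : 1 ≤ t ∧ t ≤ n - 1), Finset.mem_image, Finset.mem_filter]
    constructor
    · rintro ⟨a, ⟨ha, ha2⟩, rfl⟩
      refine ⟨by omega, ?_⟩
      have e : a - 1 + 1 = a := by omega
      rwa [e]
    · rintro ⟨hj, hmem⟩
      exact ⟨j + 1, ⟨hmem, by omega⟩, by omega⟩
  -- key membership transfer
  have hiff : ∀ j t, 2 ≤ j → 2 ≤ t → t ≤ n → (j ∈ S t ↔ j - 1 ∈ S' (t - 1)) := by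
    intro j t hj ht1 ht2
    rw [hshift (t - 1) (by omega) (by omega) (j - 1)]
    have e1 : j - 1 + 1 = j := by omega
    have e2 : t - 1 + 1 = t := by omega
    rw [e1, e2]
    constructor
    · intro h; exact ⟨by omega, h⟩
    · rintro ⟨_, h⟩; exact h
  have hadm : IsAdmissible (n - 1) S' := by
    refine ⟨?_, ?_, ?_⟩
    · intro i hi
      rw [hS']
      have : ¬(1 ≤ i ∧ i ≤ n - 1) := by omega
      simp [this]
    · intro i hi1 hi2
      constructor
      · intro j hj
        rw [hshift i hi1 hi2 j] at hj
        obtain ⟨hj1, hj2⟩ := hj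
        have := hSsub (i + 1) (by omega) (by omega) (j + 1) hj2
        simp only [Finset.mem_Icc]
        omega
      · rw [hS']
        simp only [if_pos (⟨hi1, hi2⟩ : 1 ≤ i ∧ i ≤ n - 1)]
        rw [Finset.card_image_of_injOn (by
          intro a ha b hb hab
          simp only [Finset.coe_filter, Set.mem_setOf_eq] at ha hb
          have hab' : a - 1 = b - 1 := hab
          omega)]
        have heq : (S (i + 1)).filter (fun j => 2 ≤ j) = (S (i + 1)).erase 1 := by
          ext a
          simp only [Finset.mem_filter, Finset.mem_erase]
          constructor
          · rintro ⟨h, h2⟩; exact ⟨by omega, h⟩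
          · rintro ⟨h1a, ha⟩
            have := hSsub (i + 1) (by omega) (by omega) a ha
            exact ⟨ha, by omega⟩
        rw [heq, Finset.card_erase_of_mem (h1mem (i + 1) (by omega) (by omega)),
          (hcard (i + 1) (by omega) (by omega)).2]
        omega
    · intro k hk1 hk2 j hj
      rw [hshift k hk1 (by omega) j] at hj
      obtain ⟨hj1, hj2⟩ := hj
      have := hchain (k + 1) (by omega) (by omega) hj2
      rcases Finset.mem_union.mp this with h | h
      · apply Finset.mem_union_left
        rw [hshift (k + 1) (by omega) (by omega) j]
        exact ⟨hj1, h⟩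
      · apply Finset.mem_union_right
        simp only [Finset.mem_singleton] at h ⊢
        omega
  refine ⟨hadm, ?_⟩
  -- NPP
  have hNPP : NPP n S = NPP (n - 1) S' := by
    unfold NPP
    apply Finset.card_nbij' (fun p => (p.1 - 1, p.2 - 1)) (fun p => (p.1 + 1, p.2 + 1))
    · intro p hp
      simp only [Finset.mem_coe, Finset.mem_filter, Finset.mem_product, Finset.mem_Icc] at hp ⊢
      obtain ⟨⟨⟨hk1, hk2⟩, hl1, hl2⟩, hkl, t, ht, hlt, hkt⟩ := hp
      have hk2' : 2 ≤ p.1 := by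
        rcases Nat.lt_or_ge p.1 2 with h | h
        · exfalso
          have : p.1 = 1 := by omega
          rw [this] at hkt
          exact hkt (h1mem t (by omega) (by omega))
        · exact h
      refine ⟨⟨⟨by omega, by omega⟩, by omega, by omega⟩, by omega, t - 1, ?_, ?_, ?_⟩
      · omega
      · rw [← hiff p.2 t (by omega) (by omega) (by omega)]; exact hlt
      · rw [← hiff p.1 t (by omega) (by omega) (by omega)]; exact hkt
    · intro p hp
      simp only [Finset.mem_coe, Finset.mem_filter, Finset.mem_product, Finset.mem_Icc] at hp ⊢
      obtain ⟨⟨⟨hk1, hk2⟩, hl1, hl2⟩, hkl, t, ht, hlt, hkt⟩ := hp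
      refine ⟨⟨⟨by omega, by omega⟩, by omega, by omega⟩, by omega, t + 1, ?_, ?_, ?_⟩
      · omega
      · rw [hiff (p.2 + 1) (t + 1) (by omega) (by omega) (by omega)]
        simpa using hlt
      · rw [hiff (p.1 + 1) (t + 1) (by omega) (by omega) (by omega)]
        simpa using hkt
    · intro p hp
      simp only [Finset.mem_coe, Finset.mem_filter, Finset.mem_product, Finset.mem_Icc] at hp
      obtain ⟨⟨⟨hk1, hk2⟩, hl1, hl2⟩, _⟩ := hp
      obtain ⟨a, b⟩ := p
      show (a - 1 + 1, b - 1 + 1) = (a, b)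
      simp only [Prod.mk.injEq]
      omega
    · intro p hp
      obtain ⟨a, b⟩ := p
      show (a + 1 - 1, b + 1 - 1) = (a, b)
      simp only [Prod.mk.injEq]
      omega
  -- NII
  have hNII : NII n S = NII (n - 1) S' := by
    unfold NII
    apply Finset.card_nbij' (fun p => (p.1 - 1, p.2 - 1)) (fun p => (p.1 + 1, p.2 + 1))
    · intro p hp
      simp only [Finset.mem_coe, Finset.mem_filter, Finset.mem_product, Finset.mem_Icc] at hp ⊢
      obtain ⟨⟨⟨hk1, hk2⟩, hl1, hl2⟩, hkl, t, ht, hlt, hkt⟩ := hp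
      simp only [Finset.mem_Ico] at ht
      have ht2 : 2 ≤ t := by
        rcases Nat.lt_or_ge t 2 with h | h
        · exfalso
          have : t = 1 := by omega
          rw [this, h1] at hlt
          simp only [Finset.mem_singleton] at hlt
          omega
        · exact h
      refine ⟨⟨⟨by omega, by omega⟩, by omega, by omega⟩, by omega, t - 1, ?_, ?_, ?_⟩
      · simp only [Finset.mem_Ico]; omega
      · rw [← hiff p.2 t (by omega) (by omega) (by omega)]; exact hlt
      · rw [← hiff p.1 t (by omega) (by omega) (by omega)]; exact hkt
    · intro p hp
      simp only [Finset.mem_coe, Finset.mem_filter, Finset.mem_product, Finset.mem_Icc] at hp ⊢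
      obtain ⟨⟨⟨hk1, hk2⟩, hl1, hl2⟩, hkl, t, ht, hlt, hkt⟩ := hp
      simp only [Finset.mem_Ico] at ht
      refine ⟨⟨⟨by omega, by omega⟩, by omega, by omega⟩, by omega, t + 1, ?_, ?_, ?_⟩
      · simp only [Finset.mem_Ico]; omega
      · rw [hiff (p.2 + 1) (t + 1) (by omega) (by omega) (by omega)]
        simpa using hlt
      · rw [hiff (p.1 + 1) (t + 1) (by omega) (by omega) (by omega)]
        simpa using hkt
    · intro p hp
      simp only [Finset.mem_coe, Finset.mem_filter, Finset.mem_product, Finset.mem_Icc] at hp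
      obtain ⟨⟨⟨hk1, hk2⟩, hl1, hl2⟩, _⟩ := hp
      obtain ⟨a, b⟩ := p
      show (a - 1 + 1, b - 1 + 1) = (a, b)
      simp only [Prod.mk.injEq]
      omega
    · intro p hp
      obtain ⟨a, b⟩ := p
      show (a + 1 - 1, b + 1 - 1) = (a, b)
      simp only [Prod.mk.injEq]
      omega
  -- NPI
  have hNPI : NPI n S = NPI (n - 1) S' + n := by
    conv_lhs => rw [NPI]
    set A := (Finset.Icc 1 (n + 1) ×ˢ Finset.Icc 1 (n + 1)).filter
      (fun p : ℕ × ℕ => p.1 < p.2 ∧ ∃ t ∈ Finset.Ico p.1 p.2, p.1 ∈ S t ∧ p.2 ∉ S t) with hA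
    have hsplit : (A.filter (fun p : ℕ × ℕ => p.1 = 1)).card
        + (A.filter (fun p : ℕ × ℕ => ¬p.1 = 1)).card = A.card :=
      Finset.card_filter_add_card_filter_not (p := fun p : ℕ × ℕ => p.1 = 1)
    have hA1 : (A.filter (fun p : ℕ × ℕ => p.1 = 1)).card = n := by
      have heq : A.filter (fun p : ℕ × ℕ => p.1 = 1)
          = ({1} : Finset ℕ) ×ˢ Finset.Icc 2 (n + 1) := by
        ext p
        simp only [hA, Finset.mem_filter, Finset.mem_product, Finset.mem_Icc,
          Finset.mem_singleton]
        constructor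
        · rintro ⟨⟨⟨⟨hk1, hk2⟩, hl1, hl2⟩, hkl, _⟩, hp1⟩
          exact ⟨hp1, by omega, by omega⟩
        · rintro ⟨hp1, hl1, hl2⟩
          refine ⟨⟨⟨⟨by omega, by omega⟩, by omega, by omega⟩, by omega, 1, ?_, ?_, ?_⟩, hp1⟩
          · simp only [Finset.mem_Ico]; omega
          · rw [hp1, h1]; simp
          · rw [h1]; simp only [Finset.mem_singleton]; omega
      rw [heq]
      simp [Nat.card_Icc]
    have hA2 : (A.filter (fun p : ℕ × ℕ => ¬p.1 = 1)).card = NPI (n - 1) S' := by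
      unfold NPI
      apply Finset.card_nbij' (fun p => (p.1 - 1, p.2 - 1)) (fun p => (p.1 + 1, p.2 + 1))
      · intro p hp
        simp only [hA, Finset.mem_coe, Finset.mem_filter, Finset.mem_product, Finset.mem_Icc] at hp ⊢
        obtain ⟨⟨⟨⟨hk1, hk2⟩, hl1, hl2⟩, hkl, t, ht, hkt, hlt⟩, hp1⟩ := hp
        simp only [Finset.mem_Ico] at ht
        refine ⟨⟨⟨by omega, by omega⟩, by omega, by omega⟩, by omega, t - 1, ?_, ?_, ?_⟩
        · simp only [Finset.mem_Ico]; omega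
        · rw [← hiff p.1 t (by omega) (by omega) (by omega)]; exact hkt
        · rw [← hiff p.2 t (by omega) (by omega) (by omega)]; exact hlt
      · intro p hp
        simp only [hA, Finset.mem_coe, Finset.mem_filter, Finset.mem_product, Finset.mem_Icc] at hp ⊢
        obtain ⟨⟨⟨hk1, hk2⟩, hl1, hl2⟩, hkl, t, ht, hkt, hlt⟩ := hp
        simp only [Finset.mem_Ico] at ht
        refine ⟨⟨⟨⟨by omega, by omega⟩, by omega, by omega⟩, by omega, t + 1, ?_, ?_, ?_⟩,
          by omega⟩
        · simp only [Finset.mem_Ico]; omega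
        · rw [hiff (p.1 + 1) (t + 1) (by omega) (by omega) (by omega)]
          simpa using hkt
        · rw [hiff (p.2 + 1) (t + 1) (by omega) (by omega) (by omega)]
          simpa using hlt
      · intro p hp
        simp only [hA, Finset.mem_coe, Finset.mem_filter, Finset.mem_product, Finset.mem_Icc] at hp
        obtain ⟨⟨⟨⟨hk1, hk2⟩, hl1, hl2⟩, _⟩, hp1⟩ := hp
        obtain ⟨a, b⟩ := p
        show (a - 1 + 1, b - 1 + 1) = (a, b)
        simp only [Prod.mk.injEq]
        omega
      · intro p hp
        obtain ⟨a, b⟩ := p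
        show (a + 1 - 1, b + 1 - 1) = (a, b)
        simp only [Prod.mk.injEq]
        omega
    omega
  omega
end
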